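/- Let h be a hive which is a corner (extreme point) of its hive polytope, and suppose every small triangle is contained in at most one flat rhombus of h (i.e., the flatspaces of h consist only of small triangles and unit rhombi). Then every label of h is an integer linear combination of the border labels: for every v ∈ H there exists a function c : B → ℤ such that h(v) = Σ_{b ∈ B} c(b)·h(b). -/

import Mathlib

/-- A labeling of the triangular array of hive vertices `{(i,j) : i + j ≤ n}` is a hive
if all three types of rhombus inequalities hold. -/
def IsHive {α : Type*} [Ring α] [LinearOrder α] [IsStrictOrderedRing α] (n : ℕ) (h : ℕ → ℕ → α) : Prop :=
  ∀ i j : ℕ, i + j + 2 ≤ n →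
    h i j + h (i+1) (j+1) ≤ h (i+1) j + h i (j+1) ∧
    h i (j+1) + h (i+2) j ≤ h (i+1) j + h (i+1) (j+1) ∧
    h (i+1) j + h i (j+2) ≤ h i (j+1) + h (i+1) (j+1)

/-- `(i,j)` is a border vertex of the hive triangle of size `n`. -/
def InBorder (n i j : ℕ) : Prop := i + j ≤ n ∧ (i = 0 ∨ j = 0 ∨ i + j = n)

/-- The finite set of border vertices of the hive triangle of size `n`. -/
def borderFinset (n : ℕ) : Finset (ℕ × ℕ) :=
  (Finset.range (n+1) ×ˢ Finset.range (n+1)).filter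
    (fun p => p.1 + p.2 ≤ n ∧ (p.1 = 0 ∨ p.2 = 0 ∨ p.1 + p.2 = n))

/-- The rhombus `R1(i,j) = U(i,j) ∪ D(i,j)` exists and is flat for `h`. -/
def FlatR1 (n : ℕ) (h : ℕ → ℕ → ℝ) (i j : ℕ) : Prop :=
  i + j + 2 ≤ n ∧ h (i+1) j + h i (j+1) = h i j + h (i+1) (j+1)

/-- The rhombus `R2(i,j) = D(i,j) ∪ U(i+1,j)` exists and is flat for `h`. -/
def FlatR2 (n : ℕ) (h : ℕ → ℕ → ℝ) (i j : ℕ) : Prop :=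
  i + j + 2 ≤ n ∧ h (i+1) j + h (i+1) (j+1) = h i (j+1) + h (i+2) j

/-- The rhombus `R3(i,j) = D(i,j) ∪ U(i,j+1)` exists and is flat for `h`. -/
def FlatR3 (n : ℕ) (h : ℕ → ℕ → ℝ) (i j : ℕ) : Prop :=
  i + j + 2 ≤ n ∧ h i (j+1) + h (i+1) (j+1) = h (i+1) j + h i (j+2)

/-- Every small triangle is contained in at most one flat rhombus of `h`. -/
def TrianglesAtMostOneFlat (n : ℕ) (h : ℕ → ℕ → ℝ) : Prop :=
  (∀ i j, i + j + 1 ≤ n →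
    ¬ (FlatR1 n h i j ∧ (1 ≤ i ∧ FlatR2 n h (i-1) j)) ∧
    ¬ (FlatR1 n h i j ∧ (1 ≤ j ∧ FlatR3 n h i (j-1))) ∧
    ¬ ((1 ≤ i ∧ FlatR2 n h (i-1) j) ∧ (1 ≤ j ∧ FlatR3 n h i (j-1)))) ∧
  (∀ i j, i + j + 2 ≤ n →
    ¬ (FlatR1 n h i j ∧ FlatR2 n h i j) ∧
    ¬ (FlatR1 n h i j ∧ FlatR3 n h i j) ∧
    ¬ (FlatR2 n h i j ∧ FlatR3 n h i j))

/-- `h` is a corner (extreme point) of its hive polytope. -/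
def IsHiveCorner (n : ℕ) (h : ℕ → ℕ → ℝ) : Prop :=
  ∀ g₁ g₂ : ℕ → ℕ → ℝ, IsHive n g₁ → IsHive n g₂ →
    (∀ i j, InBorder n i j → g₁ i j = h i j) →
    (∀ i j, InBorder n i j → g₂ i j = h i j) →
    (∀ i j, i + j ≤ n → h i j = (g₁ i j + g₂ i j) / 2) →
    ∀ i j, i + j ≤ n → g₁ i j = h i j ∧ g₂ i j = h i j

----------------------------------------------------------------
namespace HiveAux

inductive Ed : Type
  | A : ℕ → ℕ → Ed
  | B : ℕ → ℕ → Ed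
  | C : ℕ → ℕ → Ed
deriving DecidableEq

open Ed

def hdiff (h : ℕ → ℕ → ℝ) : Ed → ℝ
  | A i j => h (i+1) j - h i j
  | B i j => h i (j+1) - h i j
  | C i j => h i (j+1) - h (i+1) j

def evalid (n : ℕ) : Ed → Prop
  | A i j => i + j + 1 ≤ n
  | B i j => i + j + 1 ≤ n
  | C i j => i + j + 1 ≤ n

inductive Known (n : ℕ) (h : ℕ → ℕ → ℝ) : Ed → Prop
  | initA {i j} : InBorder n i j → InBorder n (i+1) j → Known n h (A i j)
  | initB {i j} : InBorder n i j → InBorder n i (j+1) → Known n h (B i j)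
  | initC {i j} : InBorder n (i+1) j → InBorder n i (j+1) → Known n h (C i j)
  | uA {i j} : Known n h (B i j) → Known n h (C i j) → Known n h (A i j)
  | uB {i j} : Known n h (A i j) → Known n h (C i j) → Known n h (B i j)
  | uC {i j} : Known n h (A i j) → Known n h (B i j) → Known n h (C i j)
  | dC {i j} : Known n h (B (i+1) j) → Known n h (A i (j+1)) → Known n h (C i j)
  | dB {i j} : Known n h (C i j) → Known n h (A i (j+1)) → Known n h (B (i+1) j)
  | dA {i j} : Known n h (C i j) → Known n h (B (i+1) j) → Known n h (A i (j+1))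
  | p1A {i j} : FlatR1 n h i j → Known n h (A i j) → Known n h (A i (j+1))
  | p1A' {i j} : FlatR1 n h i j → Known n h (A i (j+1)) → Known n h (A i j)
  | p1B {i j} : FlatR1 n h i j → Known n h (B i j) → Known n h (B (i+1) j)
  | p1B' {i j} : FlatR1 n h i j → Known n h (B (i+1) j) → Known n h (B i j)
  | p2C {i j} : FlatR2 n h i j → Known n h (C i j) → Known n h (C (i+1) j)
  | p2C' {i j} : FlatR2 n h i j → Known n h (C (i+1) j) → Known n h (C i j)
  | p2A {i j} : FlatR2 n h i j → Known n h (A i (j+1)) → Known n h (A (i+1) j)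
  | p2A' {i j} : FlatR2 n h i j → Known n h (A (i+1) j) → Known n h (A i (j+1))
  | p3C {i j} : FlatR3 n h i j → Known n h (C i j) → Known n h (C i (j+1))
  | p3C' {i j} : FlatR3 n h i j → Known n h (C i (j+1)) → Known n h (C i j)
  | p3B {i j} : FlatR3 n h i j → Known n h (B (i+1) j) → Known n h (B i (j+1))
  | p3B' {i j} : FlatR3 n h i j → Known n h (B i (j+1)) → Known n h (B (i+1) j)

noncomputable section

variable (n : ℕ) (h : ℕ → ℕ → ℝ)

def bSpan : Submodule ℤ ℝ :=
  Submodule.span ℤ (Set.range fun p : (borderFinset n : Finset (ℕ × ℕ)) => h p.1.1 p.1.2)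

lemma mem_borderFinset {i j : ℕ} (hb : InBorder n i j) : (i, j) ∈ borderFinset n := by
  obtain ⟨h1, h2⟩ := hb
  simp only [borderFinset, Finset.mem_filter, Finset.mem_product, Finset.mem_range]
  exact ⟨⟨by omega, by omega⟩, h1, h2⟩

lemma border_mem_bSpan {i j : ℕ} (hb : InBorder n i j) : h i j ∈ bSpan n h := by
  apply Submodule.subset_span
  exact ⟨⟨(i, j), mem_borderFinset n hb⟩, rfl⟩

lemma Known_diff {e : Ed} (he : Known n h e) : hdiff h e ∈ bSpan n h := by
  induction he with
  | initA hb hb' => exact sub_mem (border_mem_bSpan n h hb') (border_mem_bSpan n h hb)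
  | initB hb hb' => exact sub_mem (border_mem_bSpan n h hb') (border_mem_bSpan n h hb)
  | initC hb hb' => exact sub_mem (border_mem_bSpan n h hb') (border_mem_bSpan n h hb)
  | uA _ _ ih1 ih2 => simpa [hdiff] using sub_mem ih1 ih2
  | uB _ _ ih1 ih2 => simpa [hdiff] using add_mem ih1 ih2
  | uC _ _ ih1 ih2 => simpa [hdiff, sub_sub_sub_comm] using sub_mem ih2 ih1
  | dC _ _ ih1 ih2 => simpa [hdiff] using sub_mem ih1 ih2
  | dB _ _ ih1 ih2 => simpa [hdiff] using add_mem ih1 ih2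
  | dA _ _ ih1 ih2 => simpa [hdiff] using sub_mem ih2 ih1
  | p1A hf _ ih => convert ih using 1; simp only [hdiff]; linarith [hf.2]
  | p1A' hf _ ih => convert ih using 1; simp only [hdiff]; linarith [hf.2]
  | p1B hf _ ih => convert ih using 1; simp only [hdiff]; linarith [hf.2]
  | p1B' hf _ ih => convert ih using 1; simp only [hdiff]; linarith [hf.2]
  | p2C hf _ ih => convert ih using 1; simp only [hdiff]; linarith [hf.2]
  | p2C' hf _ ih => convert ih using 1; simp only [hdiff]; linarith [hf.2]
  | p2A hf _ ih => convert ih using 1; simp only [hdiff]; linarith [hf.2]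
  | p2A' hf _ ih => convert ih using 1; simp only [hdiff]; linarith [hf.2]
  | p3C hf _ ih => convert ih using 1; simp only [hdiff]; linarith [hf.2]
  | p3C' hf _ ih => convert ih using 1; simp only [hdiff]; linarith [hf.2]
  | p3B hf _ ih => convert ih using 1; simp only [hdiff]; linarith [hf.2]
  | p3B' hf _ ih => convert ih using 1; simp only [hdiff]; linarith [hf.2]

lemma allKnown_label (hall : ∀ e, evalid n e → Known n h e) :
    ∀ i j, i + j ≤ n → h i j ∈ bSpan n h := by
  have hbot : ∀ i, i ≤ n → h i 0 ∈ bSpan n h := by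
    intro i hi
    induction i with
    | zero => exact border_mem_bSpan n h ⟨by omega, Or.inl rfl⟩
    | succ k ih =>
      have hd := Known_diff n h (hall (A k 0) (by simp [evalid]; omega))
      have : h (k+1) 0 = (h (k+1) 0 - h k 0) + h k 0 := by ring
      rw [this]
      exact add_mem hd (ih (by omega))
  intro i j hij
  induction j with
  | zero => exact hbot i (by omega)
  | succ l ih =>
    have hd := Known_diff n h (hall (B i l) (by simp [evalid]; omega))
    have : h i (l+1) = (h i (l+1) - h i l) + h i l := by ring
    rw [this]
    exact add_mem hd (ih (by omega))


end
-- ============ Part 2: stall machinery ============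
section Stall
variable (n : ℕ) (h : ℕ → ℕ → ℝ)

/-- `e` is the internal diagonal of a flat unit rhombus. -/
def IsDiag : Ed → Prop
  | Ed.C i j => FlatR1 n h i j
  | Ed.B i j => ∃ i', i = i' + 1 ∧ FlatR2 n h i' j
  | Ed.A i j => ∃ j', j = j' + 1 ∧ FlatR3 n h i j'

/-- `e` is a variable of the stalled system. -/
def VP (e : Ed) : Prop := evalid n e ∧ ¬ Known n h e ∧ ¬ IsDiag n h e

section hflatHelpers
variable (hfl : TrianglesAtMostOneFlat n h)
include hfl

lemma nf12 {i j : ℕ} (h1 : FlatR1 n h i j) (h2 : FlatR2 n h i j) : False :=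
  ((hfl.2 i j h1.1).1) ⟨h1, h2⟩

lemma nf13 {i j : ℕ} (h1 : FlatR1 n h i j) (h3 : FlatR3 n h i j) : False :=
  ((hfl.2 i j h1.1).2.1) ⟨h1, h3⟩

lemma nf23 {i j : ℕ} (h2 : FlatR2 n h i j) (h3 : FlatR3 n h i j) : False :=
  ((hfl.2 i j h2.1).2.2) ⟨h2, h3⟩

lemma nfU12 {i j : ℕ} (h1 : FlatR1 n h (i+1) j) (h2 : FlatR2 n h i j) : False := by
  have := (hfl.1 (i+1) j (by have := h2.1; omega)).1
  exact this ⟨h1, by omega, by simpa using h2⟩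

lemma nfU13 {i j : ℕ} (h1 : FlatR1 n h i (j+1)) (h3 : FlatR3 n h i j) : False := by
  have := (hfl.1 i (j+1) (by have := h3.1; omega)).2.1
  exact this ⟨h1, by omega, by simpa using h3⟩

lemma nfU23 {i j : ℕ} (h2 : FlatR2 n h i (j+1)) (h3 : FlatR3 n h (i+1) j) : False := by
  have := (hfl.1 (i+1) (j+1) (by have := h2.1; omega)).2.2
  exact this ⟨⟨by omega, by simpa using h2⟩, by omega, by simpa using h3⟩

end hflatHelpers

-- basic validity of sides of flat rhombi
lemma VP_iff_notKnown {e : Ed} (hv : evalid n e) (hd : ¬ IsDiag n h e) :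
    VP n h e ↔ ¬ Known n h e := by
  unfold VP; tauto

section Transfers
variable (hfl : TrianglesAtMostOneFlat n h)
include hfl

lemma t1A {i j : ℕ} (hf : FlatR1 n h i j) : VP n h (Ed.A i j) ↔ VP n h (Ed.A i (j+1)) := by
  have hb := hf.1
  have d1 : ¬ IsDiag n h (Ed.A i j) := by
    rintro ⟨j', rfl, h3⟩; exact nfU13 n h hfl hf h3
  have d2 : ¬ IsDiag n h (Ed.A i (j+1)) := by
    rintro ⟨j', hj, h3⟩
    obtain rfl : j' = j := by omega
    exact nf13 n h hfl hf h3
  rw [VP_iff_notKnown n h (by simp [evalid]; omega) d1,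
      VP_iff_notKnown n h (by simp [evalid]; omega) d2]
  constructor
  · exact fun hk hk2 => hk (Known.p1A' hf hk2)
  · exact fun hk hk2 => hk (Known.p1A hf hk2)

lemma t1B {i j : ℕ} (hf : FlatR1 n h i j) : VP n h (Ed.B i j) ↔ VP n h (Ed.B (i+1) j) := by
  have hb := hf.1
  have d1 : ¬ IsDiag n h (Ed.B i j) := by
    rintro ⟨i', rfl, h2⟩; exact nfU12 n h hfl hf h2
  have d2 : ¬ IsDiag n h (Ed.B (i+1) j) := by
    rintro ⟨i', hi, h2⟩
    obtain rfl : i' = i := by omega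
    exact nf12 n h hfl hf h2
  rw [VP_iff_notKnown n h (by simp [evalid]; omega) d1,
      VP_iff_notKnown n h (by simp [evalid]; omega) d2]
  constructor
  · exact fun hk hk2 => hk (Known.p1B' hf hk2)
  · exact fun hk hk2 => hk (Known.p1B hf hk2)

lemma t2C {i j : ℕ} (hf : FlatR2 n h i j) : VP n h (Ed.C i j) ↔ VP n h (Ed.C (i+1) j) := by
  have hb := hf.1
  have d1 : ¬ IsDiag n h (Ed.C i j) := fun h1 => nf12 n h hfl h1 hf
  have d2 : ¬ IsDiag n h (Ed.C (i+1) j) := fun h1 => nfU12 n h hfl h1 hf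
  rw [VP_iff_notKnown n h (by simp [evalid]; omega) d1,
      VP_iff_notKnown n h (by simp [evalid]; omega) d2]
  constructor
  · exact fun hk hk2 => hk (Known.p2C' hf hk2)
  · exact fun hk hk2 => hk (Known.p2C hf hk2)

lemma t2A {i j : ℕ} (hf : FlatR2 n h i j) :
    VP n h (Ed.A i (j+1)) ↔ VP n h (Ed.A (i+1) j) := by
  have hb := hf.1
  have d1 : ¬ IsDiag n h (Ed.A i (j+1)) := by
    rintro ⟨j', hj, h3⟩
    obtain rfl : j' = j := by omega
    exact nf23 n h hfl hf h3
  have d2 : ¬ IsDiag n h (Ed.A (i+1) j) := by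
    rintro ⟨j', rfl, h3⟩; exact nfU23 n h hfl hf h3
  rw [VP_iff_notKnown n h (by simp [evalid]; omega) d1,
      VP_iff_notKnown n h (by simp [evalid]; omega) d2]
  constructor
  · exact fun hk hk2 => hk (Known.p2A' hf hk2)
  · exact fun hk hk2 => hk (Known.p2A hf hk2)

lemma t3C {i j : ℕ} (hf : FlatR3 n h i j) : VP n h (Ed.C i j) ↔ VP n h (Ed.C i (j+1)) := by
  have hb := hf.1
  have d1 : ¬ IsDiag n h (Ed.C i j) := fun h1 => nf13 n h hfl h1 hf
  have d2 : ¬ IsDiag n h (Ed.C i (j+1)) := fun h1 => nfU13 n h hfl h1 hf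
  rw [VP_iff_notKnown n h (by simp [evalid]; omega) d1,
      VP_iff_notKnown n h (by simp [evalid]; omega) d2]
  constructor
  · exact fun hk hk2 => hk (Known.p3C' hf hk2)
  · exact fun hk hk2 => hk (Known.p3C hf hk2)

lemma t3B {i j : ℕ} (hf : FlatR3 n h i j) :
    VP n h (Ed.B (i+1) j) ↔ VP n h (Ed.B i (j+1)) := by
  have hb := hf.1
  have d1 : ¬ IsDiag n h (Ed.B (i+1) j) := by
    rintro ⟨i', hi, h2⟩
    obtain rfl : i' = i := by omega
    exact nf23 n h hfl h2 hf
  have d2 : ¬ IsDiag n h (Ed.B i (j+1)) := by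
    rintro ⟨i', rfl, h2⟩; exact nfU23 n h hfl h2 hf
  rw [VP_iff_notKnown n h (by simp [evalid]; omega) d1,
      VP_iff_notKnown n h (by simp [evalid]; omega) d2]
  constructor
  · exact fun hk hk2 => hk (Known.p3B' hf hk2)
  · exact fun hk hk2 => hk (Known.p3B hf hk2)

end Transfers
end Stall

-- ============ Part 3: the stalled linear system ============
section System
variable (n : ℕ) (h : ℕ → ℕ → ℝ)

inductive Eqn : Type
  | tU : ℕ → ℕ → Eqn
  | tD : ℕ → ℕ → Eqn
  | q1A : ℕ → ℕ → Eqn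
  | q1B : ℕ → ℕ → Eqn
  | q2C : ℕ → ℕ → Eqn
  | q2A : ℕ → ℕ → Eqn
  | q3C : ℕ → ℕ → Eqn
  | q3B : ℕ → ℕ → Eqn
deriving DecidableEq

open Eqn Ed

def co : Eqn → Ed → ℤ
  | tU a b, Ed.A i j => if i = a ∧ j = b then 1 else 0
  | tU a b, Ed.B i j => if i = a ∧ j = b then -1 else 0
  | tU a b, Ed.C i j => if i = a ∧ j = b then 1 else 0
  | tD a b, Ed.C i j => if i = a ∧ j = b then 1 else 0
  | tD a b, Ed.B i j => if i = a + 1 ∧ j = b then -1 else 0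
  | tD a b, Ed.A i j => if i = a ∧ j = b + 1 then 1 else 0
  | q1A a b, Ed.A i j => if i = a ∧ j = b then 1 else if i = a ∧ j = b + 1 then -1 else 0
  | q1B a b, Ed.B i j => if i = a ∧ j = b then 1 else if i = a + 1 ∧ j = b then -1 else 0
  | q2C a b, Ed.C i j => if i = a ∧ j = b then 1 else if i = a + 1 ∧ j = b then -1 else 0
  | q2A a b, Ed.A i j => if i = a ∧ j = b + 1 then 1 else if i = a + 1 ∧ j = b then -1 else 0
  | q3C a b, Ed.C i j => if i = a ∧ j = b then 1 else if i = a ∧ j = b + 1 then -1 else 0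
  | q3B a b, Ed.B i j => if i = a + 1 ∧ j = b then 1 else if i = a ∧ j = b + 1 then -1 else 0
  | _, _ => 0

def wt : Eqn → ℤ
  | tU _ _ => -1
  | tD _ _ => 1
  | q1A _ _ => -1
  | q1B _ _ => 1
  | q2C _ _ => 1
  | q2A _ _ => 1
  | q3C _ _ => 1
  | q3B _ _ => -1

/-- Validity of an equation of the stalled system. -/
def Eval : Eqn → Prop
  | tU a b => a + b + 1 ≤ n ∧ ¬ IsDiag n h (C a b) ∧ ¬ IsDiag n h (B a b) ∧ ¬ IsDiag n h (A a b) ∧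
      (VP n h (A a b) ∨ VP n h (B a b) ∨ VP n h (C a b))
  | tD a b => a + b + 2 ≤ n ∧ ¬ FlatR1 n h a b ∧ ¬ FlatR2 n h a b ∧ ¬ FlatR3 n h a b ∧
      (VP n h (C a b) ∨ VP n h (B (a+1) b) ∨ VP n h (A a (b+1)))
  | q1A a b => FlatR1 n h a b ∧ VP n h (A a b)
  | q1B a b => FlatR1 n h a b ∧ VP n h (B a b)
  | q2C a b => FlatR2 n h a b ∧ VP n h (C a b)
  | q2A a b => FlatR2 n h a b ∧ VP n h (A a (b+1))
  | q3C a b => FlatR3 n h a b ∧ VP n h (C a b)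
  | q3B a b => FlatR3 n h a b ∧ VP n h (B (a+1) b)

lemma candA {q : Eqn} {i j : ℕ} (hco : co q (A i j) ≠ 0) :
    q = tU i j ∨ q = q1A i j ∨ (∃ i', i = i'+1 ∧ q = q2A i' j) ∨
    (∃ j', j = j'+1 ∧ (q = tD i j' ∨ q = q1A i j' ∨ q = q2A i j')) := by
  cases q with
  | tU a b =>
    simp only [co] at hco; split_ifs at hco with h1
    · obtain ⟨rfl, rfl⟩ := h1; exact Or.inl rfl
    · exact absurd rfl hco
  | tD a b =>
    simp only [co] at hco; split_ifs at hco with h1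
    · obtain ⟨rfl, rfl⟩ := h1; exact Or.inr (Or.inr (Or.inr ⟨b, rfl, Or.inl rfl⟩))
    · exact absurd rfl hco
  | q1A a b =>
    simp only [co] at hco; split_ifs at hco with h1 h2
    · obtain ⟨rfl, rfl⟩ := h1; exact Or.inr (Or.inl rfl)
    · obtain ⟨rfl, rfl⟩ := h2; exact Or.inr (Or.inr (Or.inr ⟨b, rfl, Or.inr (Or.inl rfl)⟩))
    · exact absurd rfl hco
  | q1B a b => simp only [co] at hco; exact absurd rfl hco
  | q2C a b => simp only [co] at hco; exact absurd rfl hco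
  | q2A a b =>
    simp only [co] at hco; split_ifs at hco with h1 h2
    · obtain ⟨rfl, rfl⟩ := h1; exact Or.inr (Or.inr (Or.inr ⟨b, rfl, Or.inr (Or.inr rfl)⟩))
    · obtain ⟨rfl, rfl⟩ := h2; exact Or.inr (Or.inr (Or.inl ⟨a, rfl, rfl⟩))
    · exact absurd rfl hco
  | q3C a b => simp only [co] at hco; exact absurd rfl hco
  | q3B a b => simp only [co] at hco; exact absurd rfl hco

lemma candB {q : Eqn} {i j : ℕ} (hco : co q (B i j) ≠ 0) :
    q = tU i j ∨ q = q1B i j ∨ (∃ j', j = j'+1 ∧ q = q3B i j') ∨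
    (∃ i', i = i'+1 ∧ (q = tD i' j ∨ q = q1B i' j ∨ q = q3B i' j)) := by
  cases q with
  | tU a b =>
    simp only [co] at hco; split_ifs at hco with h1
    · obtain ⟨rfl, rfl⟩ := h1; exact Or.inl rfl
    · exact absurd rfl hco
  | tD a b =>
    simp only [co] at hco; split_ifs at hco with h1
    · obtain ⟨rfl, rfl⟩ := h1; exact Or.inr (Or.inr (Or.inr ⟨a, rfl, Or.inl rfl⟩))
    · exact absurd rfl hco
  | q1A a b => simp only [co] at hco; exact absurd rfl hco
  | q1B a b =>
    simp only [co] at hco; split_ifs at hco with h1 h2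
    · obtain ⟨rfl, rfl⟩ := h1; exact Or.inr (Or.inl rfl)
    · obtain ⟨rfl, rfl⟩ := h2; exact Or.inr (Or.inr (Or.inr ⟨a, rfl, Or.inr (Or.inl rfl)⟩))
    · exact absurd rfl hco
  | q2C a b => simp only [co] at hco; exact absurd rfl hco
  | q2A a b => simp only [co] at hco; exact absurd rfl hco
  | q3C a b => simp only [co] at hco; exact absurd rfl hco
  | q3B a b =>
    simp only [co] at hco; split_ifs at hco with h1 h2
    · obtain ⟨rfl, rfl⟩ := h1; exact Or.inr (Or.inr (Or.inr ⟨a, rfl, Or.inr (Or.inr rfl)⟩))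
    · obtain ⟨rfl, rfl⟩ := h2; exact Or.inr (Or.inr (Or.inl ⟨b, rfl, rfl⟩))
    · exact absurd rfl hco

lemma candC {q : Eqn} {i j : ℕ} (hco : co q (C i j) ≠ 0) :
    q = tU i j ∨ (∃ i', i = i'+1 ∧ q = q2C i' j) ∨ (∃ j', j = j'+1 ∧ q = q3C i j') ∨
    (q = tD i j ∨ q = q2C i j ∨ q = q3C i j) := by
  cases q with
  | tU a b =>
    simp only [co] at hco; split_ifs at hco with h1
    · obtain ⟨rfl, rfl⟩ := h1; exact Or.inl rfl
    · exact absurd rfl hco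
  | tD a b =>
    simp only [co] at hco; split_ifs at hco with h1
    · obtain ⟨rfl, rfl⟩ := h1; exact Or.inr (Or.inr (Or.inr (Or.inl rfl)))
    · exact absurd rfl hco
  | q1A a b => simp only [co] at hco; exact absurd rfl hco
  | q1B a b => simp only [co] at hco; exact absurd rfl hco
  | q2C a b =>
    simp only [co] at hco; split_ifs at hco with h1 h2
    · obtain ⟨rfl, rfl⟩ := h1; exact Or.inr (Or.inr (Or.inr (Or.inr (Or.inl rfl))))
    · obtain ⟨rfl, rfl⟩ := h2; exact Or.inr (Or.inl ⟨a, rfl, rfl⟩)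
    · exact absurd rfl hco
  | q2A a b => simp only [co] at hco; exact absurd rfl hco
  | q3C a b =>
    simp only [co] at hco; split_ifs at hco with h1 h2
    · obtain ⟨rfl, rfl⟩ := h1; exact Or.inr (Or.inr (Or.inr (Or.inr (Or.inr rfl))))
    · obtain ⟨rfl, rfl⟩ := h2; exact Or.inr (Or.inr (Or.inl ⟨b, rfl, rfl⟩))
    · exact absurd rfl hco
  | q3B a b => simp only [co] at hco; exact absurd rfl hco

end System

-- ============ Part 4: master lemmas ============
section Master
variable (n : ℕ) (h : ℕ → ℕ → ℝ)
open Eqn Ed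

lemma masterA (hfl : TrianglesAtMostOneFlat n h) {i j : ℕ} (hx : VP n h (A i j)) :
    ∃ q1 q2 : Eqn, Eval n h q1 ∧ Eval n h q2 ∧ q1 ≠ q2 ∧
      wt q1 * co q1 (A i j) = -1 ∧ wt q2 * co q2 (A i j) = 1 ∧
      ∀ q, Eval n h q → co q (A i j) ≠ 0 → q = q1 ∨ q = q2 := by
  obtain ⟨hv, hnk, hnd⟩ := hx
  have hvij : i + j + 1 ≤ n := hv
  obtain ⟨j', rfl⟩ : ∃ j', j = j' + 1 := by
    rcases j with _ | j'
    · exact absurd (Known.initA ⟨by omega, Or.inr (Or.inl rfl)⟩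
        ⟨by omega, Or.inr (Or.inl rfl)⟩) hnk
    · exact ⟨j', rfl⟩
  have hx : VP n h (A i (j'+1)) := ⟨hv, hnk, hnd⟩
  have hnd3 : ¬ FlatR3 n h i j' := fun hf => hnd ⟨j', rfl, hf⟩
  -- D-side selection
  have hD : ∃ q2 : Eqn, Eval n h q2 ∧ wt q2 * co q2 (A i (j'+1)) = 1 ∧
      (q2 = tD i j' ∨ q2 = q1A i j' ∨ q2 = q2A i j') ∧
      ∀ q, Eval n h q → (q = tD i j' ∨ q = q1A i j' ∨ q = q2A i j') → q = q2 := by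
    by_cases hg1 : FlatR1 n h i j'
    · refine ⟨q1A i j', ⟨hg1, (t1A n h hfl hg1).mpr hx⟩, by norm_num [wt, co], Or.inr (Or.inl rfl), ?_⟩
      rintro q hq (rfl | rfl | rfl)
      · exact absurd hg1 hq.2.1
      · rfl
      · exact absurd (nf12 n h hfl hg1 hq.1) id
    · by_cases hg2 : FlatR2 n h i j'
      · refine ⟨q2A i j', ⟨hg2, hx⟩, by norm_num [wt, co], Or.inr (Or.inr rfl), ?_⟩
        rintro q hq (rfl | rfl | rfl)
        · exact absurd hg2 hq.2.2.1
        · exact absurd (nf12 n h hfl hq.1 hg2) id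
        · rfl
      · refine ⟨tD i j', ⟨by omega, hg1, hg2, hnd3, Or.inr (Or.inr hx)⟩,
          by norm_num [wt, co], Or.inl rfl, ?_⟩
        rintro q hq (rfl | rfl | rfl)
        · rfl
        · exact absurd hq.1 hg1
        · exact absurd hq.1 hg2
  obtain ⟨q2v, hq2E, hq2val, hq2id, hq2uniq⟩ := hD
  have hq2ne : ∀ a b : ℕ, q2v ≠ tU a b := by
    rcases hq2id with rfl | rfl | rfl <;> intro a b hab <;> exact Eqn.noConfusion hab
  -- U-side selection
  by_cases hf1 : FlatR1 n h i (j'+1)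
  · refine ⟨q1A i (j'+1), q2v, ⟨hf1, hx⟩, hq2E, ?_, by norm_num [wt, co], hq2val, ?_⟩
    · rcases hq2id with rfl | rfl | rfl <;> simp <;> omega
    · intro q hq hco
      rcases candA hco with rfl | rfl | ⟨i', hi, rfl⟩ | ⟨j'', hj, hrest⟩
      · exact absurd hf1 hq.2.1
      · exact Or.inl rfl
      · subst hi; exact absurd (nfU12 n h hfl hf1 hq.1) id
      · obtain rfl : j'' = j' := by omega
        exact Or.inr (hq2uniq q hq hrest)
  · by_cases hf2 : ∃ i', i = i' + 1 ∧ FlatR2 n h i' (j'+1)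
    · obtain ⟨i', rfl, hf2'⟩ := hf2
      refine ⟨q2A i' (j'+1), q2v, ⟨hf2', (t2A n h hfl hf2').mpr hx⟩, hq2E, ?_,
        by norm_num [wt, co], hq2val, ?_⟩
      · rcases hq2id with rfl | rfl | rfl <;> simp <;> omega
      · intro q hq hco
        rcases candA hco with rfl | rfl | ⟨i'', hi, rfl⟩ | ⟨j'', hj, hrest⟩
        · exact absurd ⟨i', rfl, hf2'⟩ hq.2.2.1
        · exact absurd (nfU12 n h hfl hq.1 hf2') id
        · obtain rfl : i'' = i' := by omega
          exact Or.inl rfl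
        · obtain rfl : j'' = j' := by omega
          exact Or.inr (hq2uniq q hq hrest)
    · refine ⟨tU i (j'+1), q2v, ⟨hvij, hf1, fun hd => hf2 hd, hnd, Or.inl hx⟩, hq2E, ?_,
        by norm_num [wt, co], hq2val, ?_⟩
      · exact fun hab => (hq2ne i (j'+1)) hab.symm
      · intro q hq hco
        rcases candA hco with rfl | rfl | ⟨i'', hi, rfl⟩ | ⟨j'', hj, hrest⟩
        · exact Or.inl rfl
        · exact absurd hq.1 hf1
        · exact absurd ⟨i'', hi, hq.1⟩ hf2
        · obtain rfl : j'' = j' := by omega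
          exact Or.inr (hq2uniq q hq hrest)

end Master

section Master2
variable (n : ℕ) (h : ℕ → ℕ → ℝ)
open Eqn Ed

lemma masterB (hfl : TrianglesAtMostOneFlat n h) {i j : ℕ} (hx : VP n h (B i j)) :
    ∃ q1 q2 : Eqn, Eval n h q1 ∧ Eval n h q2 ∧ q1 ≠ q2 ∧
      wt q1 * co q1 (B i j) = 1 ∧ wt q2 * co q2 (B i j) = -1 ∧
      ∀ q, Eval n h q → co q (B i j) ≠ 0 → q = q1 ∨ q = q2 := by
  obtain ⟨hv, hnk, hnd⟩ := hx
  have hvij : i + j + 1 ≤ n := hv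
  obtain ⟨i', rfl⟩ : ∃ i', i = i' + 1 := by
    rcases i with _ | i'
    · exact absurd (Known.initB ⟨by omega, Or.inl rfl⟩ ⟨by omega, Or.inl rfl⟩) hnk
    · exact ⟨i', rfl⟩
  have hx : VP n h (B (i'+1) j) := ⟨hv, hnk, hnd⟩
  have hnd2 : ¬ FlatR2 n h i' j := fun hf => hnd ⟨i', rfl, hf⟩
  -- D-side selection (triangle D(i',j))
  have hD : ∃ q2 : Eqn, Eval n h q2 ∧ wt q2 * co q2 (B (i'+1) j) = -1 ∧
      (q2 = tD i' j ∨ q2 = q1B i' j ∨ q2 = q3B i' j) ∧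
      ∀ q, Eval n h q → (q = tD i' j ∨ q = q1B i' j ∨ q = q3B i' j) → q = q2 := by
    by_cases hg1 : FlatR1 n h i' j
    · refine ⟨q1B i' j, ⟨hg1, (t1B n h hfl hg1).mpr hx⟩, by norm_num [wt, co],
        Or.inr (Or.inl rfl), ?_⟩
      rintro q hq (rfl | rfl | rfl)
      · exact absurd hg1 hq.2.1
      · rfl
      · exact absurd (nf13 n h hfl hg1 hq.1) id
    · by_cases hg3 : FlatR3 n h i' j
      · refine ⟨q3B i' j, ⟨hg3, hx⟩, by norm_num [wt, co], Or.inr (Or.inr rfl), ?_⟩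
        rintro q hq (rfl | rfl | rfl)
        · exact absurd hg3 hq.2.2.2.1
        · exact absurd (nf13 n h hfl hq.1 hg3) id
        · rfl
      · refine ⟨tD i' j, ⟨by omega, hg1, hnd2, hg3, Or.inr (Or.inl hx)⟩,
          by norm_num [wt, co], Or.inl rfl, ?_⟩
        rintro q hq (rfl | rfl | rfl)
        · rfl
        · exact absurd hq.1 hg1
        · exact absurd hq.1 hg3
  obtain ⟨q2v, hq2E, hq2val, hq2id, hq2uniq⟩ := hD
  have hq2ne : ∀ a b : ℕ, q2v ≠ tU a b := by
    rcases hq2id with rfl | rfl | rfl <;> intro a b hab <;> exact Eqn.noConfusion hab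
  -- U-side selection (triangle U(i'+1,j))
  by_cases hf1 : FlatR1 n h (i'+1) j
  · refine ⟨q1B (i'+1) j, q2v, ⟨hf1, hx⟩, hq2E, ?_, by norm_num [wt, co], hq2val, ?_⟩
    · rcases hq2id with rfl | rfl | rfl <;> simp
    · intro q hq hco
      rcases candB hco with rfl | rfl | ⟨j', hj, rfl⟩ | ⟨i'', hi, hrest⟩
      · exact absurd hf1 hq.2.1
      · exact Or.inl rfl
      · subst hj; exact absurd (nfU13 n h hfl hf1 hq.1) id
      · obtain rfl : i'' = i' := by omega
        exact Or.inr (hq2uniq q hq hrest)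
  · by_cases hf3 : ∃ j', j = j' + 1 ∧ FlatR3 n h (i'+1) j'
    · obtain ⟨j', rfl, hf3'⟩ := hf3
      refine ⟨q3B (i'+1) j', q2v, ⟨hf3', (t3B n h hfl hf3').mpr hx⟩, hq2E, ?_,
        by norm_num [wt, co], hq2val, ?_⟩
      · rcases hq2id with rfl | rfl | rfl <;> simp <;> omega
      · intro q hq hco
        rcases candB hco with rfl | rfl | ⟨j'', hj, rfl⟩ | ⟨i'', hi, hrest⟩
        · exact absurd ⟨j', rfl, hf3'⟩ hq.2.2.2.1
        · exact absurd (nfU13 n h hfl hq.1 hf3') id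
        · obtain rfl : j'' = j' := by omega
          exact Or.inl rfl
        · obtain rfl : i'' = i' := by omega
          exact Or.inr (hq2uniq q hq hrest)
    · refine ⟨tU (i'+1) j, q2v, ⟨hvij, hf1, hnd, fun hd => hf3 hd, Or.inr (Or.inl hx)⟩, hq2E, ?_,
        by norm_num [wt, co], hq2val, ?_⟩
      · exact fun hab => (hq2ne (i'+1) j) hab.symm
      · intro q hq hco
        rcases candB hco with rfl | rfl | ⟨j'', hj, rfl⟩ | ⟨i'', hi, hrest⟩
        · exact Or.inl rfl
        · exact absurd hq.1 hf1
        · exact absurd ⟨j'', hj, hq.1⟩ hf3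
        · obtain rfl : i'' = i' := by omega
          exact Or.inr (hq2uniq q hq hrest)

lemma masterC (hfl : TrianglesAtMostOneFlat n h) {i j : ℕ} (hx : VP n h (C i j)) :
    ∃ q1 q2 : Eqn, Eval n h q1 ∧ Eval n h q2 ∧ q1 ≠ q2 ∧
      wt q1 * co q1 (C i j) = -1 ∧ wt q2 * co q2 (C i j) = 1 ∧
      ∀ q, Eval n h q → co q (C i j) ≠ 0 → q = q1 ∨ q = q2 := by
  obtain ⟨hv, hnk, hnd⟩ := hx
  have hvij : i + j + 1 ≤ n := hv
  have hnd1 : ¬ FlatR1 n h i j := hnd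
  have hb2 : i + j + 2 ≤ n := by
    by_contra hb
    exact hnk (Known.initC ⟨by omega, Or.inr (Or.inr (by omega))⟩
      ⟨by omega, Or.inr (Or.inr (by omega))⟩)
  have hx : VP n h (C i j) := ⟨hv, hnk, hnd⟩
  -- D-side selection (triangle D(i,j))
  have hD : ∃ q2 : Eqn, Eval n h q2 ∧ wt q2 * co q2 (C i j) = 1 ∧
      (q2 = tD i j ∨ q2 = q2C i j ∨ q2 = q3C i j) ∧
      ∀ q, Eval n h q → (q = tD i j ∨ q = q2C i j ∨ q = q3C i j) → q = q2 := by
    by_cases hg2 : FlatR2 n h i j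
    · refine ⟨q2C i j, ⟨hg2, hx⟩, by norm_num [wt, co], Or.inr (Or.inl rfl), ?_⟩
      rintro q hq (rfl | rfl | rfl)
      · exact absurd hg2 hq.2.2.1
      · rfl
      · exact absurd (nf23 n h hfl hg2 hq.1) id
    · by_cases hg3 : FlatR3 n h i j
      · refine ⟨q3C i j, ⟨hg3, hx⟩, by norm_num [wt, co], Or.inr (Or.inr rfl), ?_⟩
        rintro q hq (rfl | rfl | rfl)
        · exact absurd hg3 hq.2.2.2.1
        · exact absurd (nf23 n h hfl hq.1 hg3) id
        · rfl
      · refine ⟨tD i j, ⟨hb2, hnd1, hg2, hg3, Or.inl hx⟩, by norm_num [wt, co], Or.inl rfl, ?_⟩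
        rintro q hq (rfl | rfl | rfl)
        · rfl
        · exact absurd hq.1 hg2
        · exact absurd hq.1 hg3
  obtain ⟨q2v, hq2E, hq2val, hq2id, hq2uniq⟩ := hD
  have hq2ne : ∀ a b : ℕ, q2v ≠ tU a b := by
    rcases hq2id with rfl | rfl | rfl <;> intro a b hab <;> exact Eqn.noConfusion hab
  -- U-side selection (triangle U(i,j))
  by_cases hf2 : ∃ i', i = i' + 1 ∧ FlatR2 n h i' j
  · obtain ⟨i', rfl, hf2'⟩ := hf2
    refine ⟨q2C i' j, q2v, ⟨hf2', (t2C n h hfl hf2').mpr hx⟩, hq2E, ?_,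
      by norm_num [wt, co], hq2val, ?_⟩
    · rcases hq2id with rfl | rfl | rfl <;> simp <;> omega
    · intro q hq hco
      rcases candC hco with rfl | ⟨i'', hi, rfl⟩ | ⟨j', hj, rfl⟩ | hrest
      · exact absurd ⟨i', rfl, hf2'⟩ hq.2.2.1
      · obtain rfl : i'' = i' := by omega
        exact Or.inl rfl
      · subst hj; exact absurd (nfU23 n h hfl hf2' hq.1) id
      · exact Or.inr (hq2uniq q hq hrest)
  · by_cases hf3 : ∃ j', j = j' + 1 ∧ FlatR3 n h i j'
    · obtain ⟨j', rfl, hf3'⟩ := hf3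
      refine ⟨q3C i j', q2v, ⟨hf3', (t3C n h hfl hf3').mpr hx⟩, hq2E, ?_,
        by norm_num [wt, co], hq2val, ?_⟩
      · rcases hq2id with rfl | rfl | rfl <;> simp <;> omega
      · intro q hq hco
        rcases candC hco with rfl | ⟨i'', hi, rfl⟩ | ⟨j'', hj, rfl⟩ | hrest
        · exact absurd ⟨j', rfl, hf3'⟩ hq.2.2.2.1
        · subst hi; exact absurd (nfU23 n h hfl hq.1 hf3') id
        · obtain rfl : j'' = j' := by omega
          exact Or.inl rfl
        · exact Or.inr (hq2uniq q hq hrest)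
    · refine ⟨tU i j, q2v, ⟨hvij, hnd, fun hd => hf2 hd, fun hd => hf3 hd,
        Or.inr (Or.inr hx)⟩, hq2E, ?_, by norm_num [wt, co], hq2val, ?_⟩
      · exact fun hab => (hq2ne i j) hab.symm
      · intro q hq hco
        rcases candC hco with rfl | ⟨i'', hi, rfl⟩ | ⟨j'', hj, rfl⟩ | hrest
        · exact Or.inl rfl
        · exact absurd ⟨i'', hi, hq.1⟩ hf2
        · exact absurd ⟨j'', hj, hq.1⟩ hf3
        · exact Or.inr (hq2uniq q hq hrest)

/-- Unified master lemma over all edge types. -/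
lemma masterE (hfl : TrianglesAtMostOneFlat n h) {e : Ed} (hx : VP n h e) :
    ∃ q1 q2 : Eqn, Eval n h q1 ∧ Eval n h q2 ∧ q1 ≠ q2 ∧
      wt q1 * co q1 e + wt q2 * co q2 e = 0 ∧ co q1 e ≠ 0 ∧ co q2 e ≠ 0 ∧
      ∀ q, Eval n h q → co q e ≠ 0 → q = q1 ∨ q = q2 := by
  cases e with
  | A i j =>
    obtain ⟨q1, q2, h1, h2, hne, hv1, hv2, huniq⟩ := masterA n h hfl hx
    exact ⟨q1, q2, h1, h2, hne, by omega, fun hz => by simp [hz] at hv1,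
      fun hz => by simp [hz] at hv2, huniq⟩
  | B i j =>
    obtain ⟨q1, q2, h1, h2, hne, hv1, hv2, huniq⟩ := masterB n h hfl hx
    exact ⟨q1, q2, h1, h2, hne, by omega, fun hz => by simp [hz] at hv1,
      fun hz => by simp [hz] at hv2, huniq⟩
  | C i j =>
    obtain ⟨q1, q2, h1, h2, hne, hv1, hv2, huniq⟩ := masterC n h hfl hx
    exact ⟨q1, q2, h1, h2, hne, by omega, fun hz => by simp [hz] at hv1,
      fun hz => by simp [hz] at hv2, huniq⟩

end Master2

-- ============ Part 6: kernel existence ============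
section Kernel
variable (n : ℕ) (h : ℕ → ℕ → ℝ)
open Eqn Ed

lemma notVP_known {e : Ed} (hval : evalid n e) (hnd : ¬ IsDiag n h e) (hn : ¬ VP n h e) :
    Known n h e := by
  unfold VP at hn; tauto

lemma eqnTwo (hfl : TrianglesAtMostOneFlat n h) {q : Eqn} (hq : Eval n h q) :
    ∃ e1 e2 : Ed, e1 ≠ e2 ∧ VP n h e1 ∧ VP n h e2 ∧ co q e1 ≠ 0 ∧ co q e2 ≠ 0 := by
  cases q with
  | tU a b =>
    obtain ⟨hb, d1, d2, d3, wit⟩ := hq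
    have hvA : evalid n (A a b) := by simpa [evalid] using hb
    have hvB : evalid n (B a b) := by simpa [evalid] using hb
    have hvC : evalid n (C a b) := by simpa [evalid] using hb
    have two : (VP n h (A a b) ∧ VP n h (B a b)) ∨ (VP n h (A a b) ∧ VP n h (C a b)) ∨
        (VP n h (B a b) ∧ VP n h (C a b)) := by
      by_cases pA : VP n h (A a b) <;> by_cases pB : VP n h (B a b) <;>
        by_cases pC : VP n h (C a b)
      · exact Or.inl ⟨pA, pB⟩
      · exact Or.inl ⟨pA, pB⟩
      · exact Or.inr (Or.inl ⟨pA, pC⟩)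
      · exact absurd (Known.uA (notVP_known n h hvB d2 pB) (notVP_known n h hvC d1 pC))
          pA.2.1
      · exact Or.inr (Or.inr ⟨pB, pC⟩)
      · exact absurd (Known.uB (notVP_known n h hvA d3 pA) (notVP_known n h hvC d1 pC))
          pB.2.1
      · exact absurd (Known.uC (notVP_known n h hvA d3 pA) (notVP_known n h hvB d2 pB))
          pC.2.1
      · rcases wit with w | w | w
        · exact absurd w pA
        · exact absurd w pB
        · exact absurd w pC
    rcases two with ⟨p1, p2⟩ | ⟨p1, p2⟩ | ⟨p1, p2⟩
    · exact ⟨A a b, B a b, by simp, p1, p2, by norm_num [co], by norm_num [co]⟩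
    · exact ⟨A a b, C a b, by simp, p1, p2, by norm_num [co], by norm_num [co]⟩
    · exact ⟨B a b, C a b, by simp, p1, p2, by norm_num [co], by norm_num [co]⟩
  | tD a b =>
    obtain ⟨hb, d1, d2, d3, wit⟩ := hq
    have hvA : evalid n (A a (b+1)) := by simp [evalid]; omega
    have hvB : evalid n (B (a+1) b) := by simp [evalid]; omega
    have hvC : evalid n (C a b) := by simp [evalid]; omega
    have ndC : ¬ IsDiag n h (C a b) := d1
    have ndB : ¬ IsDiag n h (B (a+1) b) := by
      rintro ⟨i', hi, hf⟩
      obtain rfl : i' = a := by omega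
      exact d2 hf
    have ndA : ¬ IsDiag n h (A a (b+1)) := by
      rintro ⟨j', hj, hf⟩
      obtain rfl : j' = b := by omega
      exact d3 hf
    have two : (VP n h (C a b) ∧ VP n h (B (a+1) b)) ∨ (VP n h (C a b) ∧ VP n h (A a (b+1))) ∨
        (VP n h (B (a+1) b) ∧ VP n h (A a (b+1))) := by
      by_cases pC : VP n h (C a b) <;> by_cases pB : VP n h (B (a+1) b) <;>
        by_cases pA : VP n h (A a (b+1))
      · exact Or.inl ⟨pC, pB⟩
      · exact Or.inl ⟨pC, pB⟩
      · exact Or.inr (Or.inl ⟨pC, pA⟩)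
      · exact absurd (Known.dC (notVP_known n h hvB ndB pB) (notVP_known n h hvA ndA pA))
          pC.2.1
      · exact Or.inr (Or.inr ⟨pB, pA⟩)
      · exact absurd (Known.dB (notVP_known n h hvC ndC pC) (notVP_known n h hvA ndA pA))
          pB.2.1
      · exact absurd (Known.dA (notVP_known n h hvC ndC pC) (notVP_known n h hvB ndB pB))
          pA.2.1
      · rcases wit with w | w | w
        · exact absurd w pC
        · exact absurd w pB
        · exact absurd w pA
    rcases two with ⟨p1, p2⟩ | ⟨p1, p2⟩ | ⟨p1, p2⟩
    · exact ⟨C a b, B (a+1) b, by simp, p1, p2, by norm_num [co], by norm_num [co]⟩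
    · exact ⟨C a b, A a (b+1), by simp, p1, p2, by norm_num [co], by norm_num [co]⟩
    · exact ⟨B (a+1) b, A a (b+1), by simp, p1, p2, by norm_num [co], by norm_num [co]⟩
  | q1A a b =>
    exact ⟨A a b, A a (b+1), by simp, hq.2, (t1A n h hfl hq.1).mp hq.2,
      by norm_num [co], by norm_num [co]⟩
  | q1B a b =>
    exact ⟨B a b, B (a+1) b, by simp, hq.2, (t1B n h hfl hq.1).mp hq.2,
      by norm_num [co], by norm_num [co]⟩
  | q2C a b =>
    exact ⟨C a b, C (a+1) b, by simp, hq.2, (t2C n h hfl hq.1).mp hq.2,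
      by norm_num [co], by norm_num [co]⟩
  | q2A a b =>
    exact ⟨A a (b+1), A (a+1) b, by simp, hq.2, (t2A n h hfl hq.1).mp hq.2,
      by norm_num [co], by norm_num [co]⟩
  | q3C a b =>
    exact ⟨C a b, C a (b+1), by simp, hq.2, (t3C n h hfl hq.1).mp hq.2,
      by norm_num [co], by norm_num [co]⟩
  | q3B a b =>
    exact ⟨B (a+1) b, B a (b+1), by simp, hq.2, (t3B n h hfl hq.1).mp hq.2,
      by norm_num [co], by norm_num [co]⟩

end Kernel

-- ============ Part 7: counting and the kernel vector ============
section Count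
variable (n : ℕ) (h : ℕ → ℕ → ℝ)
open Eqn Ed
open Classical in

lemma exists_kernel (hfl : TrianglesAtMostOneFlat n h) (hne : ∃ e, VP n h e) :
    ∃ δV : Ed → ℝ, (∀ e, ¬ VP n h e → δV e = 0) ∧ (∃ e, δV e ≠ 0) ∧
      (∀ q, Eval n h q → ∀ S : Finset Ed, (∀ e, co q e ≠ 0 → e ∈ S) →
        ∑ e ∈ S, (co q e : ℝ) * δV e = 0) := by
  classical
  -- the finite sets of variables and equations
  let edF : Finset Ed := (Finset.range (n+1) ×ˢ Finset.range (n+1)).biUnion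
    (fun p => {A p.1 p.2, B p.1 p.2, C p.1 p.2})
  let eqF : Finset Eqn := (Finset.range (n+1) ×ˢ Finset.range (n+1)).biUnion
    (fun p => {tU p.1 p.2, tD p.1 p.2, q1A p.1 p.2, q1B p.1 p.2,
               q2C p.1 p.2, q2A p.1 p.2, q3C p.1 p.2, q3B p.1 p.2})
  have memEd : ∀ e : Ed, VP n h e → e ∈ edF := by
    rintro (⟨i, j⟩ | ⟨i, j⟩ | ⟨i, j⟩) hv
    · have := hv.1; simp only [evalid] at this
      exact Finset.mem_biUnion.mpr ⟨(i, j), by simp; omega, by simp⟩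
    · have := hv.1; simp only [evalid] at this
      exact Finset.mem_biUnion.mpr ⟨(i, j), by simp; omega, by simp⟩
    · have := hv.1; simp only [evalid] at this
      exact Finset.mem_biUnion.mpr ⟨(i, j), by simp; omega, by simp⟩
  have memEq : ∀ q : Eqn, Eval n h q → q ∈ eqF := by
    rintro (⟨a, b⟩ | ⟨a, b⟩ | ⟨a, b⟩ | ⟨a, b⟩ | ⟨a, b⟩ | ⟨a, b⟩ | ⟨a, b⟩ | ⟨a, b⟩) hq
    · have := hq.1; exact Finset.mem_biUnion.mpr ⟨(a, b), by simp; omega, by simp⟩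
    · have := hq.1; exact Finset.mem_biUnion.mpr ⟨(a, b), by simp; omega, by simp⟩
    · have := hq.1.1; exact Finset.mem_biUnion.mpr ⟨(a, b), by simp; omega, by simp⟩
    · have := hq.1.1; exact Finset.mem_biUnion.mpr ⟨(a, b), by simp; omega, by simp⟩
    · have := hq.1.1; exact Finset.mem_biUnion.mpr ⟨(a, b), by simp; omega, by simp⟩
    · have := hq.1.1; exact Finset.mem_biUnion.mpr ⟨(a, b), by simp; omega, by simp⟩
    · have := hq.1.1; exact Finset.mem_biUnion.mpr ⟨(a, b), by simp; omega, by simp⟩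
    · have := hq.1.1; exact Finset.mem_biUnion.mpr ⟨(a, b), by simp; omega, by simp⟩
  set Vfin : Finset Ed := edF.filter (fun e => VP n h e) with hVfin
  set Efin : Finset Eqn := eqF.filter (fun q => Eval n h q) with hEfin
  have memV : ∀ e, e ∈ Vfin ↔ VP n h e := by
    intro e
    simp only [hVfin, Finset.mem_filter]
    exact ⟨fun hh => hh.2, fun hh => ⟨memEd e hh, hh⟩⟩
  have memE : ∀ q, q ∈ Efin ↔ Eval n h q := by
    intro q
    simp only [hEfin, Finset.mem_filter]
    exact ⟨fun hh => hh.2, fun hh => ⟨memEq q hh, hh⟩⟩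
  -- counting : Efin.card ≤ Vfin.card
  have hcount : Efin.card ≤ Vfin.card := by
    have key : ∀ q ∈ Efin, 2 ≤ ∑ e ∈ Vfin, (if co q e ≠ 0 then 1 else 0) := by
      intro q hq
      obtain ⟨e1, e2, hne12, hv1, hv2, hc1, hc2⟩ := eqnTwo n h hfl ((memE q).mp hq)
      calc (2:ℕ) = ∑ e ∈ ({e1, e2} : Finset Ed), (if co q e ≠ 0 then 1 else 0) := by
            rw [Finset.sum_insert (by simpa using hne12), Finset.sum_singleton,
               if_pos hc1, if_pos hc2]
        _ ≤ _ := by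
            apply Finset.sum_le_sum_of_subset_of_nonneg
            · intro e he
              rcases Finset.mem_insert.mp he with rfl | he
              · exact (memV e).mpr hv1
              · rw [Finset.mem_singleton] at he; subst he; exact (memV e).mpr hv2
            · intro e _ _; positivity
    have key2 : ∀ e ∈ Vfin, (∑ q ∈ Efin, (if co q e ≠ 0 then 1 else 0)) = 2 := by
      intro e he
      obtain ⟨q1, q2, hE1, hE2, hq12, _, hc1, hc2, huniq⟩ := masterE n h hfl ((memV e).mp he)
      have : Efin.filter (fun q => co q e ≠ 0) = {q1, q2} := by
        ext q
        simp only [Finset.mem_filter, Finset.mem_insert, Finset.mem_singleton]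
        constructor
        · rintro ⟨hqE, hco⟩; exact huniq q ((memE q).mp hqE) hco
        · rintro (rfl | rfl)
          · exact ⟨(memE q).mpr hE1, hc1⟩
          · exact ⟨(memE q).mpr hE2, hc2⟩
      calc ∑ q ∈ Efin, (if co q e ≠ 0 then 1 else 0)
          = (Efin.filter (fun q => co q e ≠ 0)).card := by
            rw [Finset.card_filter]
        _ = 2 := by rw [this]; rw [Finset.card_insert_of_notMem (by simpa using hq12),
              Finset.card_singleton]
    have swap : ∑ q ∈ Efin, ∑ e ∈ Vfin, (if co q e ≠ 0 then (1:ℕ) else 0)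
        = ∑ e ∈ Vfin, ∑ q ∈ Efin, (if co q e ≠ 0 then 1 else 0) := Finset.sum_comm
    have h1 : 2 * Efin.card ≤ ∑ q ∈ Efin, ∑ e ∈ Vfin, (if co q e ≠ 0 then (1:ℕ) else 0) := by
      have : 2 * Efin.card = ∑ _q ∈ Efin, 2 := by
        rw [Finset.sum_const, smul_eq_mul, mul_comm]
      rw [this]
      exact Finset.sum_le_sum key
    have h2 : ∑ e ∈ Vfin, ∑ q ∈ Efin, (if co q e ≠ 0 then (1:ℕ) else 0) = 2 * Vfin.card := by
      rw [Finset.sum_congr rfl key2, Finset.sum_const, smul_eq_mul, mul_comm]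
    omega
  -- the matrix and its kernel
  let M : Matrix Efin Vfin ℝ := fun q x => (co q.1 x.1 : ℝ)
  have hVne : Vfin.Nonempty := by
    obtain ⟨e, he⟩ := hne; exact ⟨e, (memV e).mpr he⟩
  have hEne : Efin.Nonempty := by
    obtain ⟨e, he⟩ := hne
    obtain ⟨q1, _, hE1, _⟩ := masterE n h hfl he
    exact ⟨q1, (memE q1).mpr hE1⟩
  have hker : ∃ δ0 : Vfin → ℝ, δ0 ≠ 0 ∧ M.mulVec δ0 = 0 := by
    by_contra hcon
    push_neg at hcon
    have hinj : Function.Injective M.mulVecLin := by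
      rw [← LinearMap.ker_eq_bot, Submodule.eq_bot_iff]
      intro x hx
      by_contra hx0
      exact hcon x hx0 (by simpa [LinearMap.mem_ker, Matrix.mulVecLin_apply] using hx)
    -- the left functional
    let ℓ : (Efin → ℝ) →ₗ[ℝ] ℝ := ∑ q : Efin, (wt q.1 : ℝ) • LinearMap.proj q
    have hℓapp : ∀ y, ℓ y = ∑ q : Efin, (wt q.1 : ℝ) * y q := by
      intro y; simp [ℓ, LinearMap.sum_apply]
    have hortho : ∀ δ : Vfin → ℝ, ℓ (M.mulVec δ) = 0 := by
      intro δ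
      rw [hℓapp]
      have : ∀ q : Efin, (wt q.1 : ℝ) * (M.mulVec δ q)
          = ∑ x : Vfin, δ x * ((wt q.1 : ℝ) * (co q.1 x.1 : ℝ)) := by
        intro q
        simp only [Matrix.mulVec, dotProduct, Finset.mul_sum, M]
        congr 1; ext x; ring
      rw [Finset.sum_congr rfl (fun q _ => this q), Finset.sum_comm]
      apply Finset.sum_eq_zero
      intro x _
      rw [← Finset.mul_sum]
      have hx : VP n h x.1 := (memV x.1).mp x.2
      obtain ⟨q1, q2, hE1, hE2, hq12, hvsum, hc1, hc2, huniq⟩ := masterE n h hfl hx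
      have : ∑ q : Efin, (wt q.1 : ℝ) * (co q.1 x.1 : ℝ) = 0 := by
        have hq1m : q1 ∈ Efin := (memE q1).mpr hE1
        have hq2m : q2 ∈ Efin := (memE q2).mpr hE2
        rw [show (∑ q : Efin, (wt q.1 : ℝ) * (co q.1 x.1 : ℝ))
            = ∑ q ∈ Efin, (wt q : ℝ) * (co q x.1 : ℝ) from
          Finset.sum_coe_sort Efin (fun q => (wt q : ℝ) * (co q x.1 : ℝ))]
        have hsub : ∑ q ∈ Efin, (wt q : ℝ) * (co q x.1 : ℝ)
            = ∑ q ∈ ({q1, q2} : Finset Eqn), (wt q : ℝ) * (co q x.1 : ℝ) := by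
          apply (Finset.sum_subset ?_ ?_).symm
          · intro q hq
            rcases Finset.mem_insert.mp hq with rfl | hq
            · exact hq1m
            · rw [Finset.mem_singleton] at hq; subst hq; exact hq2m
          · intro q hqm hqn
            have : co q x.1 = 0 := by
              by_contra hco
              rcases huniq q ((memE q).mp hqm) hco with rfl | rfl
              · exact hqn (by simp)
              · exact hqn (by simp)
            simp [this]
        rw [hsub, Finset.sum_insert (by simpa using hq12), Finset.sum_singleton]
        push_cast
        have : (wt q1 * co q1 x.1 : ℤ) + (wt q2 * co q2 x.1 : ℤ) = 0 := hvsum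
        exact_mod_cast by push_cast at this ⊢; linarith [this]
      rw [this, mul_zero]
    -- rank bound
    have hrange : LinearMap.range M.mulVecLin ≤ LinearMap.ker ℓ := by
      rintro y ⟨δ, rfl⟩
      simpa [Matrix.mulVecLin_apply, LinearMap.mem_ker] using hortho δ
    have hℓsurj : Function.Surjective ℓ := by
      obtain ⟨q0, hq0⟩ := hEne
      intro r
      refine ⟨fun q => if q = ⟨q0, hq0⟩ then r / (wt q0 : ℝ) else 0, ?_⟩
      rw [hℓapp]
      rw [Finset.sum_eq_single (⟨q0, hq0⟩ : Efin)]
      · have : (wt q0 : ℝ) ≠ 0 := by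
          cases q0 <;> simp [wt]
        field_simp
        rw [if_pos trivial]
        field_simp
      · intro b _ hb; simp [hb]
      · intro hb; exact absurd (Finset.mem_univ _) hb
    have e1 : Module.finrank ℝ (LinearMap.range M.mulVecLin) = Vfin.card := by
      rw [LinearMap.finrank_range_of_inj hinj]
      simp [Module.finrank_pi]
    have e2 : Module.finrank ℝ (LinearMap.ker ℓ) + 1 = Efin.card := by
      have := LinearMap.finrank_range_add_finrank_ker ℓ
      rw [LinearMap.range_eq_top.mpr hℓsurj] at this
      simp only [finrank_top, Module.finrank_self] at this
      have hpi : Module.finrank ℝ (Efin → ℝ) = Efin.card := by simp [Module.finrank_pi]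
      omega
    have hle : Module.finrank ℝ (LinearMap.range M.mulVecLin)
        ≤ Module.finrank ℝ (LinearMap.ker ℓ) := Submodule.finrank_mono hrange
    have hVcard : 1 ≤ Vfin.card := Finset.card_pos.mpr hVne
    omega
  obtain ⟨δ0, hδ0ne, hδ0ker⟩ := hker
  refine ⟨fun e => if he : e ∈ Vfin then δ0 ⟨e, he⟩ else 0, ?_, ?_, ?_⟩
  · intro e hnv
    show (if he : e ∈ Vfin then δ0 ⟨e, he⟩ else 0) = 0
    rw [dif_neg (fun hm => hnv ((memV e).mp hm))]
  · have : ∃ x : Vfin, δ0 x ≠ 0 := by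
      by_contra hz; push_neg at hz
      exact hδ0ne (funext fun x => hz x)
    obtain ⟨⟨e, he⟩, hx⟩ := this
    refine ⟨e, ?_⟩
    show (if he : e ∈ Vfin then δ0 ⟨e, he⟩ else 0) ≠ 0
    rw [dif_pos he]
    exact hx
  · intro q hq S hS
    have hqm : q ∈ Efin := (memE q).mpr hq
    have hrow : M.mulVec δ0 ⟨q, hqm⟩ = 0 := by rw [hδ0ker]; rfl
    simp only [Matrix.mulVec, dotProduct, M] at hrow
    have hconv : ∑ x : Vfin, (co q x.1 : ℝ) * δ0 x
        = ∑ e ∈ Vfin, (co q e : ℝ) * (if he : e ∈ Vfin then δ0 ⟨e, he⟩ else 0) := by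
      rw [← Finset.sum_coe_sort Vfin]
      apply Finset.sum_congr rfl
      intro x _
      rw [dif_pos x.2]
    have hS2 : ∀ T : Finset Ed, Vfin ⊆ T →
        ∑ e ∈ T, (co q e : ℝ) * (if he : e ∈ Vfin then δ0 ⟨e, he⟩ else 0)
        = ∑ e ∈ Vfin, (co q e : ℝ) * (if he : e ∈ Vfin then δ0 ⟨e, he⟩ else 0) := by
      intro T hT
      refine (Finset.sum_subset hT ?_).symm
      intro e _ hev
      rw [dif_neg hev, mul_zero]
    have hS3 : ∀ T : Finset Ed, S ⊆ T →
        ∑ e ∈ T, (co q e : ℝ) * (if he : e ∈ Vfin then δ0 ⟨e, he⟩ else 0)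
        = ∑ e ∈ S, (co q e : ℝ) * (if he : e ∈ Vfin then δ0 ⟨e, he⟩ else 0) := by
      intro T hT
      refine (Finset.sum_subset hT ?_).symm
      intro e _ hev
      have : co q e = 0 := by by_contra hco; exact hev (hS e hco)
      rw [this]
      simp
    calc ∑ e ∈ S, (co q e : ℝ) * (if he : e ∈ Vfin then δ0 ⟨e, he⟩ else 0)
        = ∑ e ∈ Vfin ∪ S, (co q e : ℝ) * (if he : e ∈ Vfin then δ0 ⟨e, he⟩ else 0) :=
          (hS3 _ Finset.subset_union_right).symm
      _ = ∑ e ∈ Vfin, (co q e : ℝ) * (if he : e ∈ Vfin then δ0 ⟨e, he⟩ else 0) :=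
          hS2 _ Finset.subset_union_left
      _ = ∑ x : Vfin, (co q x.1 : ℝ) * δ0 x := hconv.symm
      _ = 0 := hrow
end Count

-- ============ Part 8: from the kernel vector to an edge field ============
section EdgeField
variable (n : ℕ) (h : ℕ → ℕ → ℝ) (δV : Ed → ℝ)
open Eqn Ed

section Rows
variable (hz : ∀ e, ¬ VP n h e → δV e = 0)
  (hrow : ∀ q, Eval n h q → ∀ S : Finset Ed, (∀ e, co q e ≠ 0 → e ∈ S) →
    ∑ e ∈ S, (co q e : ℝ) * δV e = 0)
include hz hrow

lemma rowU {a b : ℕ} (hq : Eval n h (tU a b)) :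
    δV (A a b) - δV (B a b) + δV (C a b) = 0 := by
  have hS : ∀ e, co (tU a b) e ≠ 0 → e ∈ ({A a b, B a b, C a b} : Finset Ed) := by
    rintro (⟨i, j⟩ | ⟨i, j⟩ | ⟨i, j⟩) hco <;> simp only [co] at hco <;>
      split_ifs at hco with h1 <;>
      first
        | (obtain ⟨rfl, rfl⟩ := h1; simp)
        | exact absurd rfl hco
  have := hrow (tU a b) hq _ hS
  rw [Finset.sum_insert (by simp), Finset.sum_insert (by simp), Finset.sum_singleton] at this
  norm_num [co] at this
  linarith [this]

lemma rowD {a b : ℕ} (hq : Eval n h (tD a b)) :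
    δV (C a b) - δV (B (a+1) b) + δV (A a (b+1)) = 0 := by
  have hS : ∀ e, co (tD a b) e ≠ 0 → e ∈ ({C a b, B (a+1) b, A a (b+1)} : Finset Ed) := by
    rintro (⟨i, j⟩ | ⟨i, j⟩ | ⟨i, j⟩) hco <;> simp only [co] at hco <;>
      split_ifs at hco with h1 <;>
      first
        | (obtain ⟨rfl, rfl⟩ := h1; simp)
        | exact absurd rfl hco
  have := hrow (tD a b) hq _ hS
  rw [Finset.sum_insert (by simp), Finset.sum_insert (by simp), Finset.sum_singleton] at this
  norm_num [co] at this
  linarith [this]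

lemma rowPair {q : Eqn} {e1 e2 : Ed} (hq : Eval n h q) (hne : e1 ≠ e2)
    (hc1 : co q e1 = 1) (hc2 : co q e2 = -1)
    (hS : ∀ e, co q e ≠ 0 → e ∈ ({e1, e2} : Finset Ed)) :
    δV e1 = δV e2 := by
  have := hrow q hq _ hS
  rw [Finset.sum_insert (by simpa using hne), Finset.sum_singleton, hc1, hc2] at this
  push_cast at this
  linarith [this]

lemma pair1A {a b : ℕ} (hfl : TrianglesAtMostOneFlat n h) (hf : FlatR1 n h a b) :
    δV (A a b) = δV (A a (b+1)) := by
  by_cases hx : VP n h (A a b)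
  · refine rowPair n h δV hz hrow (q := q1A a b) ⟨hf, hx⟩ (by simp)
      (by norm_num [co]) (by norm_num [co]) ?_
    rintro (⟨i, j⟩ | ⟨i, j⟩ | ⟨i, j⟩) hco <;> simp only [co] at hco <;>
      first
        | exact absurd rfl hco
        | (split_ifs at hco with h1 h2 <;>
            first
              | (obtain ⟨rfl, rfl⟩ := h1; simp)
              | (obtain ⟨rfl, rfl⟩ := h2; simp)
              | exact absurd rfl hco)
  · rw [hz _ hx, hz _ (fun hx2 => hx ((t1A n h hfl hf).mpr hx2))]

lemma pair1B {a b : ℕ} (hfl : TrianglesAtMostOneFlat n h) (hf : FlatR1 n h a b) :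
    δV (B a b) = δV (B (a+1) b) := by
  by_cases hx : VP n h (B a b)
  · refine rowPair n h δV hz hrow (q := q1B a b) ⟨hf, hx⟩ (by simp)
      (by norm_num [co]) (by norm_num [co]) ?_
    rintro (⟨i, j⟩ | ⟨i, j⟩ | ⟨i, j⟩) hco <;> simp only [co] at hco <;>
      first
        | exact absurd rfl hco
        | (split_ifs at hco with h1 h2 <;>
            first
              | (obtain ⟨rfl, rfl⟩ := h1; simp)
              | (obtain ⟨rfl, rfl⟩ := h2; simp)
              | exact absurd rfl hco)
  · rw [hz _ hx, hz _ (fun hx2 => hx ((t1B n h hfl hf).mpr hx2))]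

lemma pair2C {a b : ℕ} (hfl : TrianglesAtMostOneFlat n h) (hf : FlatR2 n h a b) :
    δV (C a b) = δV (C (a+1) b) := by
  by_cases hx : VP n h (C a b)
  · refine rowPair n h δV hz hrow (q := q2C a b) ⟨hf, hx⟩ (by simp)
      (by norm_num [co]) (by norm_num [co]) ?_
    rintro (⟨i, j⟩ | ⟨i, j⟩ | ⟨i, j⟩) hco <;> simp only [co] at hco <;>
      first
        | exact absurd rfl hco
        | (split_ifs at hco with h1 h2 <;>
            first
              | (obtain ⟨rfl, rfl⟩ := h1; simp)
              | (obtain ⟨rfl, rfl⟩ := h2; simp)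
              | exact absurd rfl hco)
  · rw [hz _ hx, hz _ (fun hx2 => hx ((t2C n h hfl hf).mpr hx2))]

lemma pair2A {a b : ℕ} (hfl : TrianglesAtMostOneFlat n h) (hf : FlatR2 n h a b) :
    δV (A a (b+1)) = δV (A (a+1) b) := by
  by_cases hx : VP n h (A a (b+1))
  · refine rowPair n h δV hz hrow (q := q2A a b) ⟨hf, hx⟩ (by simp)
      (by norm_num [co]) (by norm_num [co]) ?_
    rintro (⟨i, j⟩ | ⟨i, j⟩ | ⟨i, j⟩) hco <;> simp only [co] at hco <;>
      first
        | exact absurd rfl hco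
        | (split_ifs at hco with h1 h2 <;>
            first
              | (obtain ⟨rfl, rfl⟩ := h1; simp)
              | (obtain ⟨rfl, rfl⟩ := h2; simp)
              | exact absurd rfl hco)
  · rw [hz _ hx, hz _ (fun hx2 => hx ((t2A n h hfl hf).mpr hx2))]

lemma pair3C {a b : ℕ} (hfl : TrianglesAtMostOneFlat n h) (hf : FlatR3 n h a b) :
    δV (C a b) = δV (C a (b+1)) := by
  by_cases hx : VP n h (C a b)
  · refine rowPair n h δV hz hrow (q := q3C a b) ⟨hf, hx⟩ (by simp)
      (by norm_num [co]) (by norm_num [co]) ?_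
    rintro (⟨i, j⟩ | ⟨i, j⟩ | ⟨i, j⟩) hco <;> simp only [co] at hco <;>
      first
        | exact absurd rfl hco
        | (split_ifs at hco with h1 h2 <;>
            first
              | (obtain ⟨rfl, rfl⟩ := h1; simp)
              | (obtain ⟨rfl, rfl⟩ := h2; simp)
              | exact absurd rfl hco)
  · rw [hz _ hx, hz _ (fun hx2 => hx ((t3C n h hfl hf).mpr hx2))]

lemma pair3B {a b : ℕ} (hfl : TrianglesAtMostOneFlat n h) (hf : FlatR3 n h a b) :
    δV (B (a+1) b) = δV (B a (b+1)) := by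
  by_cases hx : VP n h (B (a+1) b)
  · refine rowPair n h δV hz hrow (q := q3B a b) ⟨hf, hx⟩ (by simp)
      (by norm_num [co]) (by norm_num [co]) ?_
    rintro (⟨i, j⟩ | ⟨i, j⟩ | ⟨i, j⟩) hco <;> simp only [co] at hco <;>
      first
        | exact absurd rfl hco
        | (split_ifs at hco with h1 h2 <;>
            first
              | (obtain ⟨rfl, rfl⟩ := h1; simp)
              | (obtain ⟨rfl, rfl⟩ := h2; simp)
              | exact absurd rfl hco)
  · rw [hz _ hx, hz _ (fun hx2 => hx ((t3B n h hfl hf).mpr hx2))]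

end Rows

open Classical in
/-- Extension of the kernel vector to all edges (diagonals get the value forced by
their flat rhombus). -/
noncomputable def dfull : Ed → ℝ
  | C i j => if FlatR1 n h i j then δV (B i j) - δV (A i j) else δV (C i j)
  | B 0 j => δV (B 0 j)
  | B (i+1) j => if FlatR2 n h i j then δV (C i j) + δV (A i (j+1)) else δV (B (i+1) j)
  | A i 0 => δV (A i 0)
  | A i (j+1) => if FlatR3 n h i j then δV (B (i+1) j) - δV (C i j) else δV (A i (j+1))

end EdgeField

-- ============ Part 9: the perturbation function ============
section Perturb
variable (n : ℕ) (h : ℕ → ℕ → ℝ) (δV : Ed → ℝ)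
  (hfl : TrianglesAtMostOneFlat n h)
  (hz : ∀ e, ¬ VP n h e → δV e = 0)
  (hrow : ∀ q, Eval n h q → ∀ S : Finset Ed, (∀ e, co q e ≠ 0 → e ∈ S) →
    ∑ e ∈ S, (co q e : ℝ) * δV e = 0)
open Eqn Ed
include hfl hz hrow

lemma relU {i j : ℕ} (hb : i + j + 1 ≤ n) :
    dfull n h δV (C i j) = dfull n h δV (B i j) - dfull n h δV (A i j) := by
  by_cases hf1 : FlatR1 n h i j
  · have hB : dfull n h δV (B i j) = δV (B i j) := by
      rcases i with _ | i'
      · simp [dfull]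
      · simp only [dfull]
        rw [if_neg (fun h2 => nfU12 n h hfl hf1 h2)]
    have hA : dfull n h δV (A i j) = δV (A i j) := by
      rcases j with _ | j'
      · simp [dfull]
      · simp only [dfull]
        rw [if_neg (fun h3 => nfU13 n h hfl hf1 h3)]
    have hC : dfull n h δV (C i j) = δV (B i j) - δV (A i j) := by
      simp only [dfull]; rw [if_pos hf1]
    rw [hC, hB, hA]
  · by_cases hf2 : ∃ i', i = i' + 1 ∧ FlatR2 n h i' j
    · obtain ⟨i', rfl, hf2'⟩ := hf2
      have hB : dfull n h δV (B (i'+1) j) = δV (C (i'+1) j) + δV (A (i'+1) j) := by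
        simp only [dfull]
        rw [if_pos hf2', pair2C n h δV hz hrow hfl hf2', pair2A n h δV hz hrow hfl hf2']
      have hA : dfull n h δV (A (i'+1) j) = δV (A (i'+1) j) := by
        rcases j with _ | j'
        · simp [dfull]
        · simp only [dfull]
          rw [if_neg (fun h3 => nfU23 n h hfl hf2' h3)]
      have hC : dfull n h δV (C (i'+1) j) = δV (C (i'+1) j) := by
        simp only [dfull]; rw [if_neg hf1]
      rw [hB, hA, hC]; ring
    · by_cases hf3 : ∃ j', j = j' + 1 ∧ FlatR3 n h i j'
      · obtain ⟨j', rfl, hf3'⟩ := hf3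
        have hA : dfull n h δV (A i (j'+1)) = δV (B i (j'+1)) - δV (C i (j'+1)) := by
          simp only [dfull]
          rw [if_pos hf3', pair3B n h δV hz hrow hfl hf3', pair3C n h δV hz hrow hfl hf3']
        have hB : dfull n h δV (B i (j'+1)) = δV (B i (j'+1)) := by
          rcases i with _ | i''
          · simp [dfull]
          · simp only [dfull]
            rw [if_neg (fun h2 => nfU23 n h hfl h2 hf3')]
        have hC : dfull n h δV (C i (j'+1)) = δV (C i (j'+1)) := by
          simp only [dfull]; rw [if_neg hf1]
        rw [hA, hB, hC]; ring
      · have hA : dfull n h δV (A i j) = δV (A i j) := by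
          rcases j with _ | j'
          · simp [dfull]
          · simp only [dfull]
            rw [if_neg (fun h3 => hf3 ⟨j', rfl, h3⟩)]
        have hB : dfull n h δV (B i j) = δV (B i j) := by
          rcases i with _ | i'
          · simp [dfull]
          · simp only [dfull]
            rw [if_neg (fun h2 => hf2 ⟨i', rfl, h2⟩)]
        have hC : dfull n h δV (C i j) = δV (C i j) := by
          simp only [dfull]; rw [if_neg hf1]
        rw [hA, hB, hC]
        by_cases hVP : VP n h (A i j) ∨ VP n h (B i j) ∨ VP n h (C i j)
        · have := rowU n h δV hz hrow (a := i) (b := j)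
            ⟨hb, hf1, (fun hd => hf2 hd), (fun hd => hf3 hd), hVP⟩
          linarith [this]
        · push_neg at hVP
          rw [hz _ hVP.1, hz _ hVP.2.1, hz _ hVP.2.2]; ring

lemma relD {i j : ℕ} (hb : i + j + 2 ≤ n) :
    dfull n h δV (C i j) = dfull n h δV (B (i+1) j) - dfull n h δV (A i (j+1)) := by
  by_cases hf1 : FlatR1 n h i j
  · have hC : dfull n h δV (C i j) = δV (B (i+1) j) - δV (A i (j+1)) := by
      simp only [dfull]
      rw [if_pos hf1, pair1B n h δV hz hrow hfl hf1, pair1A n h δV hz hrow hfl hf1]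
    have hB : dfull n h δV (B (i+1) j) = δV (B (i+1) j) := by
      simp only [dfull]
      rw [if_neg (fun h2 => nf12 n h hfl hf1 h2)]
    have hA : dfull n h δV (A i (j+1)) = δV (A i (j+1)) := by
      simp only [dfull]
      rw [if_neg (fun h3 => nf13 n h hfl hf1 h3)]
    rw [hC, hB, hA]
  · by_cases hf2 : FlatR2 n h i j
    · have hB : dfull n h δV (B (i+1) j) = δV (C i j) + δV (A i (j+1)) := by
        simp only [dfull]; rw [if_pos hf2]
      have hC : dfull n h δV (C i j) = δV (C i j) := by
        simp only [dfull]; rw [if_neg hf1]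
      have hA : dfull n h δV (A i (j+1)) = δV (A i (j+1)) := by
        simp only [dfull]
        rw [if_neg (fun h3 => nf23 n h hfl hf2 h3)]
      rw [hB, hC, hA]; ring
    · by_cases hf3 : FlatR3 n h i j
      · have hA : dfull n h δV (A i (j+1)) = δV (B (i+1) j) - δV (C i j) := by
          simp only [dfull]; rw [if_pos hf3]
        have hC : dfull n h δV (C i j) = δV (C i j) := by
          simp only [dfull]; rw [if_neg hf1]
        have hB : dfull n h δV (B (i+1) j) = δV (B (i+1) j) := by
          simp only [dfull]
          rw [if_neg (fun h2 => nf23 n h hfl h2 hf3)]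
        rw [hA, hC, hB]; ring
      · have hC : dfull n h δV (C i j) = δV (C i j) := by
          simp only [dfull]; rw [if_neg hf1]
        have hB : dfull n h δV (B (i+1) j) = δV (B (i+1) j) := by
          simp only [dfull]; rw [if_neg hf2]
        have hA : dfull n h δV (A i (j+1)) = δV (A i (j+1)) := by
          simp only [dfull]; rw [if_neg hf3]
        rw [hC, hB, hA]
        by_cases hVP : VP n h (C i j) ∨ VP n h (B (i+1) j) ∨ VP n h (A i (j+1))
        · have := rowD n h δV hz hrow (a := i) (b := j) ⟨hb, hf1, hf2, hf3, hVP⟩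
          linarith [this]
        · push_neg at hVP
          rw [hz _ hVP.1, hz _ hVP.2.1, hz _ hVP.2.2]; ring

end Perturb

-- ============ Part 10: the vertex perturbation ============
section Vertex
variable (n : ℕ) (h : ℕ → ℕ → ℝ) (δV : Ed → ℝ)
open Eqn Ed

noncomputable def dd : ℕ → ℕ → ℝ := fun i j =>
  (∑ k ∈ Finset.range i, dfull n h δV (A k 0)) + ∑ l ∈ Finset.range j, dfull n h δV (B i l)

lemma dd_B (i j : ℕ) : dd n h δV i (j+1) - dd n h δV i j = dfull n h δV (B i j) := by
  simp [dd, Finset.sum_range_succ]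

section WithHyp
variable (hfl : TrianglesAtMostOneFlat n h)
  (hz : ∀ e, ¬ VP n h e → δV e = 0)
  (hrow : ∀ q, Eval n h q → ∀ S : Finset Ed, (∀ e, co q e ≠ 0 → e ∈ S) →
    ∑ e ∈ S, (co q e : ℝ) * δV e = 0)
include hfl hz hrow

lemma dd_A {i j : ℕ} (hb : i + j + 1 ≤ n) :
    dd n h δV (i+1) j - dd n h δV i j = dfull n h δV (A i j) := by
  induction j with
  | zero => simp [dd, Finset.sum_range_succ]
  | succ j' ih =>
    have hb' : i + j' + 1 ≤ n := by omega
    have hU := relU n h δV hfl hz hrow hb'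
    have hD := relD n h δV hfl hz hrow (by omega : i + j' + 2 ≤ n)
    have e1 := dd_B n h δV i j'
    have e2 := dd_B n h δV (i+1) j'
    have e3 := ih hb'
    linarith [e1, e2, e3, hU, hD]

lemma dd_C {i j : ℕ} (hb : i + j + 1 ≤ n) :
    dd n h δV i (j+1) - dd n h δV (i+1) j = dfull n h δV (C i j) := by
  have hU := relU n h δV hfl hz hrow hb
  have e1 := dd_B n h δV i j
  have e2 := dd_A n h δV hfl hz hrow hb
  linarith [e1, e2, hU]

lemma dd_border {i j : ℕ} (hb : InBorder n i j) : dd n h δV i j = 0 := by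
  have zA : ∀ k, k + 1 ≤ n → dfull n h δV (A k 0) = 0 := by
    intro k hk
    have : dfull n h δV (A k 0) = δV (A k 0) := by simp [dfull]
    rw [this]
    exact hz _ (fun hv => hv.2.1 (Known.initA ⟨by omega, Or.inr (Or.inl rfl)⟩
      ⟨by omega, Or.inr (Or.inl rfl)⟩))
  have zB : ∀ l, l + 1 ≤ n → dfull n h δV (B 0 l) = 0 := by
    intro l hl
    have : dfull n h δV (B 0 l) = δV (B 0 l) := by simp [dfull]
    rw [this]
    exact hz _ (fun hv => hv.2.1 (Known.initB ⟨by omega, Or.inl rfl⟩ ⟨by omega, Or.inl rfl⟩))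
  have hbot : ∀ i', i' ≤ n → dd n h δV i' 0 = 0 := by
    intro i' hi'
    simp only [dd, Finset.range_zero, Finset.sum_empty, add_zero]
    apply Finset.sum_eq_zero
    intro k hk
    rw [Finset.mem_range] at hk
    exact zA k (by omega)
  have hdiag : ∀ j' i', i' + j' = n → dd n h δV i' j' = 0 := by
    intro j'
    induction j' with
    | zero => intro i' hi'; exact hbot i' (by omega)
    | succ l ih =>
      intro i' hi'
      have hC := dd_C n h δV hfl hz hrow (by omega : i' + l + 1 ≤ n)
      have hCz : dfull n h δV (C i' l) = 0 := by
        have hnotf : ¬ FlatR1 n h i' l := fun hf => by have := hf.1; omega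
        have : dfull n h δV (C i' l) = δV (C i' l) := by
          simp only [dfull]; rw [if_neg hnotf]
        rw [this]
        exact hz _ (fun hv => hv.2.1 (Known.initC ⟨by omega, Or.inr (Or.inr (by omega))⟩
          ⟨by omega, Or.inr (Or.inr (by omega))⟩))
      have := ih (i'+1) (by omega)
      linarith [hC, hCz, this]
  obtain ⟨hb1, hb2 | hb2 | hb2⟩ := hb
  · subst hb2
    simp only [dd, Finset.range_zero, Finset.sum_empty, zero_add]
    apply Finset.sum_eq_zero
    intro l hl
    rw [Finset.mem_range] at hl
    exact zB l (by omega)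
  · subst hb2; exact hbot i (by omega)
  · exact hdiag j i hb2

lemma dd_flat1 {i j : ℕ} (hf : FlatR1 n h i j) :
    dd n h δV (i+1) j + dd n h δV i (j+1) = dd n h δV i j + dd n h δV (i+1) (j+1) := by
  have hb := hf.1
  have e1 := dd_A n h δV hfl hz hrow (by omega : i + j + 1 ≤ n)
  have e2 := dd_A n h δV hfl hz hrow (by omega : i + (j+1) + 1 ≤ n)
  have hA1 : dfull n h δV (A i j) = δV (A i j) := by
    rcases j with _ | j'
    · simp [dfull]
    · simp only [dfull]
      rw [if_neg (fun h3 => nfU13 n h hfl hf h3)]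
  have hA2 : dfull n h δV (A i (j+1)) = δV (A i (j+1)) := by
    simp only [dfull]
    rw [if_neg (fun h3 => nf13 n h hfl hf h3)]
  have := pair1A n h δV hz hrow hfl hf
  linarith [e1, e2, hA1, hA2, this]

lemma dd_flat2 {i j : ℕ} (hf : FlatR2 n h i j) :
    dd n h δV (i+1) j + dd n h δV (i+1) (j+1) = dd n h δV i (j+1) + dd n h δV (i+2) j := by
  have hb := hf.1
  have e1 := dd_C n h δV hfl hz hrow (by omega : i + j + 1 ≤ n)
  have e2 := dd_C n h δV hfl hz hrow (by omega : (i+1) + j + 1 ≤ n)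
  have hC1 : dfull n h δV (C i j) = δV (C i j) := by
    simp only [dfull]
    rw [if_neg (fun h1 => nf12 n h hfl h1 hf)]
  have hC2 : dfull n h δV (C (i+1) j) = δV (C (i+1) j) := by
    simp only [dfull]
    rw [if_neg (fun h1 => nfU12 n h hfl h1 hf)]
  have := pair2C n h δV hz hrow hfl hf
  linarith [e1, e2, hC1, hC2, this]

lemma dd_flat3 {i j : ℕ} (hf : FlatR3 n h i j) :
    dd n h δV i (j+1) + dd n h δV (i+1) (j+1) = dd n h δV (i+1) j + dd n h δV i (j+2) := by
  have hb := hf.1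
  have e1 := dd_C n h δV hfl hz hrow (by omega : i + j + 1 ≤ n)
  have e2 := dd_C n h δV hfl hz hrow (by omega : i + (j+1) + 1 ≤ n)
  have hC1 : dfull n h δV (C i j) = δV (C i j) := by
    simp only [dfull]
    rw [if_neg (fun h1 => nf13 n h hfl h1 hf)]
  have hC2 : dfull n h δV (C i (j+1)) = δV (C i (j+1)) := by
    simp only [dfull]
    rw [if_neg (fun h1 => nfU13 n h hfl h1 hf)]
  have := pair3C n h δV hz hrow hfl hf
  linarith [e1, e2, hC1, hC2, this]

lemma dd_nonzero (hnz : ∃ e, δV e ≠ 0) :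
    ∃ i j, i + j ≤ n ∧ dd n h δV i j ≠ 0 := by
  obtain ⟨e, he⟩ := hnz
  have hVP : VP n h e := by
    by_contra hv
    exact he (hz e hv)
  have hfe : dfull n h δV e = δV e := by
    rcases e with ⟨i, j⟩ | ⟨i, j⟩ | ⟨i, j⟩
    · rcases j with _ | j'
      · simp [dfull]
      · simp only [dfull]
        rw [if_neg (fun h3 => hVP.2.2 ⟨j', rfl, h3⟩)]
    · rcases i with _ | i'
      · simp [dfull]
      · simp only [dfull]
        rw [if_neg (fun h2 => hVP.2.2 ⟨i', rfl, h2⟩)]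
    · simp only [dfull]
      exact if_neg hVP.2.2
  rcases e with ⟨i, j⟩ | ⟨i, j⟩ | ⟨i, j⟩
  · have hb : i + j + 1 ≤ n := hVP.1
    have := dd_A n h δV hfl hz hrow hb
    by_cases h1 : dd n h δV i j ≠ 0
    · exact ⟨i, j, by omega, h1⟩
    · push_neg at h1
      refine ⟨i+1, j, by omega, ?_⟩
      rw [hfe] at this
      intro h2
      rw [h1, h2] at this
      simp at this
      exact he this.symm
  · have hb : i + j + 1 ≤ n := hVP.1
    have := dd_B n h δV i j
    by_cases h1 : dd n h δV i j ≠ 0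
    · exact ⟨i, j, by omega, h1⟩
    · push_neg at h1
      refine ⟨i, j+1, by omega, ?_⟩
      rw [hfe] at this
      intro h2
      rw [h1, h2] at this
      simp at this
      exact he this.symm
  · have hb : i + j + 1 ≤ n := hVP.1
    have := dd_C n h δV hfl hz hrow hb
    by_cases h1 : dd n h δV (i+1) j ≠ 0
    · exact ⟨i+1, j, by omega, h1⟩
    · push_neg at h1
      refine ⟨i, j+1, by omega, ?_⟩
      rw [hfe] at this
      intro h2
      rw [h1, h2] at this
      simp at this
      exact he this.symm

end WithHyp
end Vertex

-- ============ Part 11: the corner contradiction ============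
section Final
variable (n : ℕ) (h : ℕ → ℕ → ℝ)
open Eqn Ed

lemma slack_pert {ε a b : ℝ} (hε : 0 < ε) (h1 : ε * (|b| + 1) ≤ a) :
    0 ≤ a + ε * b ∧ 0 ≤ a - ε * b := by
  constructor <;> nlinarith [le_abs_self b, neg_abs_le b, abs_nonneg b, hε.le]

set_option maxHeartbeats 1000000 in
lemma stall_contradiction (hh : IsHive n h) (hc : IsHiveCorner n h)
    (hfl : TrianglesAtMostOneFlat n h) (hne : ∃ e, VP n h e) : False := by
  classical
  obtain ⟨δV, hz, hnz, hrow⟩ := exists_kernel n h hfl hne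
  set d : ℕ → ℕ → ℝ := dd n h δV with hd
  -- slacks
  set s1h : ℕ × ℕ → ℝ := fun p => (h (p.1+1) p.2 + h p.1 (p.2+1)) - (h p.1 p.2 + h (p.1+1) (p.2+1)) with hs1h
  set s2h : ℕ × ℕ → ℝ := fun p => (h (p.1+1) p.2 + h (p.1+1) (p.2+1)) - (h p.1 (p.2+1) + h (p.1+2) p.2) with hs2h
  set s3h : ℕ × ℕ → ℝ := fun p => (h p.1 (p.2+1) + h (p.1+1) (p.2+1)) - (h (p.1+1) p.2 + h p.1 (p.2+2)) with hs3h
  set s1d : ℕ × ℕ → ℝ := fun p => (d (p.1+1) p.2 + d p.1 (p.2+1)) - (d p.1 p.2 + d (p.1+1) (p.2+1)) with hs1d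
  set s2d : ℕ × ℕ → ℝ := fun p => (d (p.1+1) p.2 + d (p.1+1) (p.2+1)) - (d p.1 (p.2+1) + d (p.1+2) p.2) with hs2d
  set s3d : ℕ × ℕ → ℝ := fun p => (d p.1 (p.2+1) + d (p.1+1) (p.2+1)) - (d (p.1+1) p.2 + d p.1 (p.2+2)) with hs3d
  set P : Finset (ℕ × ℕ) := Finset.range n ×ˢ Finset.range n with hP
  set Q1 : Finset (ℕ × ℕ) := P.filter (fun p => p.1 + p.2 + 2 ≤ n ∧ ¬ FlatR1 n h p.1 p.2) with hQ1
  set Q2 : Finset (ℕ × ℕ) := P.filter (fun p => p.1 + p.2 + 2 ≤ n ∧ ¬ FlatR2 n h p.1 p.2) with hQ2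
  set Q3 : Finset (ℕ × ℕ) := P.filter (fun p => p.1 + p.2 + 2 ≤ n ∧ ¬ FlatR3 n h p.1 p.2) with hQ3
  have hpos : ∀ (Q : Finset (ℕ × ℕ)) (sh sd : ℕ × ℕ → ℝ),
      (∀ p ∈ Q, 0 < sh p) →
      ∃ ε0 : ℝ, 0 < ε0 ∧ ε0 ≤ 1 ∧ ∀ p ∈ Q, ε0 * (|sd p| + 1) ≤ sh p := by
    intro Q sh sd hQpos
    by_cases hQ : Q.Nonempty
    · refine ⟨min 1 (Q.inf' hQ (fun p => sh p / (|sd p| + 1))), ?_, min_le_left _ _, ?_⟩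
      · apply lt_min one_pos
        rw [Finset.lt_inf'_iff]
        intro p hp
        exact div_pos (hQpos p hp) (by positivity)
      · intro p hp
        have h1 : min 1 (Q.inf' hQ (fun p => sh p / (|sd p| + 1))) ≤ sh p / (|sd p| + 1) :=
          le_trans (min_le_right _ _) (Finset.inf'_le _ hp)
        calc min 1 (Q.inf' hQ fun p => sh p / (|sd p| + 1)) * (|sd p| + 1)
            ≤ (sh p / (|sd p| + 1)) * (|sd p| + 1) := by
              apply mul_le_mul_of_nonneg_right h1 (by positivity)
          _ = sh p := by field_simp
    · exact ⟨1, one_pos, le_refl 1, fun p hp => absurd hp (by simp [Finset.not_nonempty_iff_eq_empty.mp hQ])⟩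
  have hq1pos : ∀ p ∈ Q1, 0 < s1h p := by
    intro p hp
    simp only [hQ1, Finset.mem_filter] at hp
    obtain ⟨_, hb, hnf⟩ := hp
    have := (hh p.1 p.2 hb).1
    have hne' : s1h p ≠ 0 := by
      intro hzz
      apply hnf
      refine ⟨hb, ?_⟩
      simp only [hs1h] at hzz
      linarith [hzz]
    simp only [hs1h]
    simp only [hs1h] at hne'
    rcases lt_or_eq_of_le (by linarith : (0:ℝ) ≤ (h (p.1+1) p.2 + h p.1 (p.2+1)) - (h p.1 p.2 + h (p.1+1) (p.2+1))) with hlt | heq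
    · exact hlt
    · exact absurd heq.symm hne'
  have hq2pos : ∀ p ∈ Q2, 0 < s2h p := by
    intro p hp
    simp only [hQ2, Finset.mem_filter] at hp
    obtain ⟨_, hb, hnf⟩ := hp
    have := (hh p.1 p.2 hb).2.1
    have hne' : s2h p ≠ 0 := by
      intro hzz
      apply hnf
      refine ⟨hb, ?_⟩
      simp only [hs2h] at hzz
      linarith [hzz]
    simp only [hs2h]
    simp only [hs2h] at hne'
    rcases lt_or_eq_of_le (by linarith : (0:ℝ) ≤ (h (p.1+1) p.2 + h (p.1+1) (p.2+1)) - (h p.1 (p.2+1) + h (p.1+2) p.2)) with hlt | heq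
    · exact hlt
    · exact absurd heq.symm hne'
  have hq3pos : ∀ p ∈ Q3, 0 < s3h p := by
    intro p hp
    simp only [hQ3, Finset.mem_filter] at hp
    obtain ⟨_, hb, hnf⟩ := hp
    have := (hh p.1 p.2 hb).2.2
    have hne' : s3h p ≠ 0 := by
      intro hzz
      apply hnf
      refine ⟨hb, ?_⟩
      simp only [hs3h] at hzz
      linarith [hzz]
    simp only [hs3h]
    simp only [hs3h] at hne'
    rcases lt_or_eq_of_le (by linarith : (0:ℝ) ≤ (h p.1 (p.2+1) + h (p.1+1) (p.2+1)) - (h (p.1+1) p.2 + h p.1 (p.2+2))) with hlt | heq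
    · exact hlt
    · exact absurd heq.symm hne'
  obtain ⟨ε1, hε1, _, hb1⟩ := hpos Q1 s1h s1d hq1pos
  obtain ⟨ε2, hε2, _, hb2⟩ := hpos Q2 s2h s2d hq2pos
  obtain ⟨ε3, hε3, _, hb3⟩ := hpos Q3 s3h s3d hq3pos
  set ε := min ε1 (min ε2 ε3) with hε
  have hεpos : 0 < ε := lt_min hε1 (lt_min hε2 hε3)
  have hmem : ∀ i j, i + j + 2 ≤ n → ((i, j) : ℕ × ℕ) ∈ P := by
    intro i j hb
    simp only [hP, Finset.mem_product, Finset.mem_range]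
    omega
  -- the two perturbed hives
  set g1 : ℕ → ℕ → ℝ := fun i j => h i j + ε * d i j with hg1
  set g2 : ℕ → ℕ → ℝ := fun i j => h i j - ε * d i j with hg2
  have key : ∀ i j, i + j + 2 ≤ n →
      (0 ≤ s1h (i,j) + ε * s1d (i,j) ∧ 0 ≤ s1h (i,j) - ε * s1d (i,j)) ∧
      (0 ≤ s2h (i,j) + ε * s2d (i,j) ∧ 0 ≤ s2h (i,j) - ε * s2d (i,j)) ∧
      (0 ≤ s3h (i,j) + ε * s3d (i,j) ∧ 0 ≤ s3h (i,j) - ε * s3d (i,j)) := by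
    intro i j hb
    refine ⟨?_, ?_, ?_⟩
    · by_cases hf : FlatR1 n h i j
      · have h1 : s1h (i,j) = 0 := by simp only [hs1h]; linarith [hf.2]
        have h2 : s1d (i,j) = 0 := by
          simp only [hs1d]
          have := dd_flat1 n h δV hfl hz hrow hf
          simp only [hd]
          linarith [this]
        rw [h1, h2]; norm_num
      · have hQ : ((i,j) : ℕ × ℕ) ∈ Q1 := by
          simp only [hQ1, Finset.mem_filter]
          exact ⟨hmem i j hb, hb, hf⟩
        exact slack_pert hεpos (le_trans (mul_le_mul_of_nonneg_right
          (le_trans (min_le_left _ _) (le_refl _)) (by positivity)) (hb1 _ hQ))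
    · by_cases hf : FlatR2 n h i j
      · have h1 : s2h (i,j) = 0 := by simp only [hs2h]; linarith [hf.2]
        have h2 : s2d (i,j) = 0 := by
          simp only [hs2d]
          have := dd_flat2 n h δV hfl hz hrow hf
          simp only [hd]
          linarith [this]
        rw [h1, h2]; norm_num
      · have hQ : ((i,j) : ℕ × ℕ) ∈ Q2 := by
          simp only [hQ2, Finset.mem_filter]
          exact ⟨hmem i j hb, hb, hf⟩
        exact slack_pert hεpos (le_trans (mul_le_mul_of_nonneg_right
          (le_trans (le_trans (min_le_right _ _) (min_le_left _ _)) (le_refl _)) (by positivity)) (hb2 _ hQ))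
    · by_cases hf : FlatR3 n h i j
      · have h1 : s3h (i,j) = 0 := by simp only [hs3h]; linarith [hf.2]
        have h2 : s3d (i,j) = 0 := by
          simp only [hs3d]
          have := dd_flat3 n h δV hfl hz hrow hf
          simp only [hd]
          linarith [this]
        rw [h1, h2]; norm_num
      · have hQ : ((i,j) : ℕ × ℕ) ∈ Q3 := by
          simp only [hQ3, Finset.mem_filter]
          exact ⟨hmem i j hb, hb, hf⟩
        exact slack_pert hεpos (le_trans (mul_le_mul_of_nonneg_right
          (le_trans (le_trans (min_le_right _ _) (min_le_right _ _)) (le_refl _)) (by positivity)) (hb3 _ hQ))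
  have hg1hive : IsHive n g1 := by
    intro i j hb
    obtain ⟨⟨k1, _⟩, ⟨k2, _⟩, ⟨k3, _⟩⟩ := key i j hb
    simp only [hs1h, hs1d] at k1
    simp only [hs2h, hs2d] at k2
    simp only [hs3h, hs3d] at k3
    ring_nf at k1 k2 k3
    refine ⟨?_, ?_, ?_⟩ <;> simp only [hg1] <;> ring_nf <;> linarith
  have hg2hive : IsHive n g2 := by
    intro i j hb
    obtain ⟨⟨_, k1⟩, ⟨_, k2⟩, ⟨_, k3⟩⟩ := key i j hb
    simp only [hs1h, hs1d] at k1
    simp only [hs2h, hs2d] at k2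
    simp only [hs3h, hs3d] at k3
    ring_nf at k1 k2 k3
    refine ⟨?_, ?_, ?_⟩ <;> simp only [hg2] <;> ring_nf <;> linarith
  have hg1b : ∀ i j, InBorder n i j → g1 i j = h i j := by
    intro i j hbij
    simp only [hg1, hd]
    rw [dd_border n h δV hfl hz hrow hbij]
    ring
  have hg2b : ∀ i j, InBorder n i j → g2 i j = h i j := by
    intro i j hbij
    simp only [hg2, hd]
    rw [dd_border n h δV hfl hz hrow hbij]
    ring
  have havg : ∀ i j, i + j ≤ n → h i j = (g1 i j + g2 i j) / 2 := by
    intro i j _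
    simp only [hg1, hg2]
    ring
  obtain ⟨i0, j0, hij0, hdne⟩ := dd_nonzero n h δV hfl hz hrow hnz
  have := (hc g1 g2 hg1hive hg2hive hg1b hg2b havg i0 j0 hij0).1
  simp only [hg1] at this
  have : ε * d i0 j0 = 0 := by linarith [this]
  rcases mul_eq_zero.mp this with hε0 | hd0
  · exact absurd hε0 (ne_of_gt hεpos)
  · exact hdne hd0

end Final

-- ============ Part 12: a VP witness from a non-Known edge ============
section Witness
variable (n : ℕ) (h : ℕ → ℕ → ℝ)
open Eqn Ed

lemma exists_VP_of_notKnown (hfl : TrianglesAtMostOneFlat n h)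
    {e : Ed} (hev : evalid n e) (hnk : ¬ Known n h e) : ∃ e', VP n h e' := by
  by_cases hd : IsDiag n h e
  · rcases e with ⟨i, j⟩ | ⟨i, j⟩ | ⟨i, j⟩
    · -- A i j diagonal of R3(i,j')
      obtain ⟨j', rfl, hf3⟩ := hd
      have hb := hf3.1
      by_cases hC : Known n h (C i j')
      · by_cases hB : Known n h (B (i+1) j')
        · exact absurd (Known.dA hC hB) hnk
        · refine ⟨B (i+1) j', ⟨by simp [evalid]; omega, hB, ?_⟩⟩
          rintro ⟨i'', hi, hf2⟩
          obtain rfl : i'' = i := by omega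
          exact nf23 n h hfl hf2 hf3
      · refine ⟨C i j', ⟨by simp [evalid]; omega, hC, ?_⟩⟩
        intro hf1
        exact nf13 n h hfl hf1 hf3
    · -- B i j diagonal of R2(i',j)
      obtain ⟨i', rfl, hf2⟩ := hd
      have hb := hf2.1
      by_cases hC : Known n h (C i' j)
      · by_cases hA : Known n h (A i' (j+1))
        · exact absurd (Known.dB hC hA) hnk
        · refine ⟨A i' (j+1), ⟨by simp [evalid]; omega, hA, ?_⟩⟩
          rintro ⟨j'', hj, hf3⟩
          obtain rfl : j'' = j := by omega
          exact nf23 n h hfl hf2 hf3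
      · refine ⟨C i' j, ⟨by simp [evalid]; omega, hC, ?_⟩⟩
        intro hf1
        exact nf12 n h hfl hf1 hf2
    · -- C i j diagonal of R1(i,j)
      have hf1 : FlatR1 n h i j := hd
      have hb := hf1.1
      by_cases hA : Known n h (A i j)
      · by_cases hB : Known n h (B i j)
        · exact absurd (Known.uC hA hB) hnk
        · refine ⟨B i j, ⟨by simp [evalid]; omega, hB, ?_⟩⟩
          rintro ⟨i'', rfl, hf2⟩
          exact nfU12 n h hfl hf1 hf2
      · refine ⟨A i j, ⟨by simp [evalid]; omega, hA, ?_⟩⟩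
        rintro ⟨j'', rfl, hf3⟩
        exact nfU13 n h hfl hf1 hf3
  · exact ⟨e, hev, hnk, hd⟩

end Witness
end HiveAux


/-- If a hive which is a corner of its hive polytope has all flatspaces equal to small
triangles or small rhombi, then each of its labels is an integer linear combination of
its border labels. -/
theorem labels_int_comb_of_border (n : ℕ) (hn : 1 ≤ n) (h : ℕ → ℕ → ℝ)
    (hh : IsHive n h) (hc : IsHiveCorner n h) (hflat : TrianglesAtMostOneFlat n h) :
    ∀ i j, i + j ≤ n → ∃ c : ℕ × ℕ → ℤ,
      h i j = ∑ p ∈ borderFinset n, (c p : ℝ) * h p.1 p.2 := by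
  classical
  intro i j hij
  by_cases hall : ∀ e, HiveAux.evalid n e → HiveAux.Known n h e
  · have hm := HiveAux.allKnown_label n h hall i j hij
    rw [HiveAux.bSpan] at hm
    rw [Submodule.mem_span_range_iff_exists_fun] at hm
    obtain ⟨c, hcsum⟩ := hm
    refine ⟨fun p => if hp : p ∈ borderFinset n then c ⟨p, hp⟩ else 0, ?_⟩
    rw [← hcsum]
    rw [← Finset.sum_coe_sort (borderFinset n)
      (fun p => ((if hp : p ∈ borderFinset n then c ⟨p, hp⟩ else 0 : ℤ) : ℝ) * h p.1 p.2)]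
    apply Finset.sum_congr rfl
    intro p _
    rw [dif_pos p.2]
    rw [zsmul_eq_mul]
  · push_neg at hall
    obtain ⟨e, hev, hnk⟩ := hall
    exact absurd (HiveAux.stall_contradiction n h hh hc hflat
      (HiveAux.exists_VP_of_notKnown n h hflat hev hnk)) id
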